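/- arXiv:1409.1065 — 8 statements merged into one kernel-verified Lean document; each statement's English description precedes it below -/
import Mathlib

section
/- Let f : [a,b] → ℝ be absolutely continuous with f'' ∈ L¹[a,b] and |f''| s-convex in the second sense on [a,b] for some s ∈ (0,1]. Then for every x ∈ (a,b): |f(x) + (f(a)+f(b))/2 - [(1/(x-a))∫_a^x f(t)dt + (1/(b-x))∫_x^b f(t)dt]| ≤ ((x-a)² + (b-x)²)/(2(s+2)(s+3))·|f''(x)| + (1/(2(s+2)(s+3)))·[(x-a)²|f''(a)| + (b-x)²|f''(b)|]. -/
open MeasureTheory Set intervalIntegral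

lemma parts_identity (f f' f'' : ℝ → ℝ) (c d : ℝ) (hcd : c ≤ d)
    (hf' : ∀ t ∈ Set.Icc c d, HasDerivAt f (f' t) t)
    (hf'' : ∀ t ∈ Set.Icc c d, HasDerivAt f' (f'' t) t)
    (hint : IntervalIntegrable f'' volume c d) :
    (∫ t in c..d, (t - c) * (d - t) * f'' t)
      = (d - c) * (f c + f d) - 2 * ∫ t in c..d, f t := by
  have huIcc : Set.uIcc c d = Set.Icc c d := Set.uIcc_of_le hcd
  have hfc : ContinuousOn f (Set.Icc c d) := fun t ht =>
    (hf' t ht).continuousAt.continuousWithinAt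
  have hf'c : ContinuousOn f' (Set.Icc c d) := fun t ht =>
    (hf'' t ht).continuousAt.continuousWithinAt
  have hfint : IntervalIntegrable f volume c d := by
    rw [intervalIntegrable_iff_integrableOn_Icc_of_le hcd]
    exact hfc.integrableOn_Icc
  have hf'int : IntervalIntegrable f' volume c d := by
    rw [intervalIntegrable_iff_integrableOn_Icc_of_le hcd]
    exact hf'c.integrableOn_Icc
  have hu : ∀ t ∈ Set.uIcc c d, HasDerivAt (fun t => (t - c) * (d - t)) (c + d - 2 * t) t := by
    intro t _
    have h := ((hasDerivAt_id t).sub_const c).mul ((hasDerivAt_const t d).sub (hasDerivAt_id t))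
    simp only [id_eq] at h
    refine h.congr_deriv ?_
    simp only [Pi.sub_apply, id_eq]
    ring
  have hu2 : ∀ t ∈ Set.uIcc c d, HasDerivAt (fun t => c + d - 2 * t) (-2) t := by
    intro t _
    have h := (hasDerivAt_const t (c + d)).sub ((hasDerivAt_id t).const_mul 2)
    simp only [id_eq] at h
    refine h.congr_deriv ?_
    norm_num
  have hucont : IntervalIntegrable (fun t => c + d - 2 * t) volume c d :=
    (by continuity : Continuous fun t : ℝ => c + d - 2 * t).intervalIntegrable c d
  have hv : ∀ t ∈ Set.uIcc c d, HasDerivAt f' (f'' t) t := fun t ht => hf'' t (huIcc ▸ ht)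
  have hv2 : ∀ t ∈ Set.uIcc c d, HasDerivAt f (f' t) t := fun t ht => hf' t (huIcc ▸ ht)
  have h1 := integral_mul_deriv_eq_deriv_mul hu hv hucont hint
  have h2 := integral_mul_deriv_eq_deriv_mul hu2 hv2
    ((continuous_const : Continuous fun _ : ℝ => (-2:ℝ)).intervalIntegrable c d) hf'int
  rw [intervalIntegral.integral_const_mul] at h2
  rw [h2] at h1
  rw [h1]
  ring

lemma kernel_int0 (D s : ℝ) (hD : 0 < D) (hs : 0 < s) :
    (∫ u in (0:ℝ)..D, u * (D - u) * (u / D) ^ s)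
      = D ^ 3 / ((s + 2) * (s + 3)) := by
  have hDs : (0:ℝ) < D ^ s := Real.rpow_pos_of_pos hD s
  have step1 : (∫ u in (0:ℝ)..D, u * (D - u) * (u / D) ^ s)
      = ∫ u in (0:ℝ)..D, (u ^ (s + 1) * D - u ^ (s + 2)) / D ^ s := by
    apply intervalIntegral.integral_congr
    intro u hu
    rw [Set.uIcc_of_le hD.le] at hu
    show u * (D - u) * (u / D) ^ s = (u ^ (s + 1) * D - u ^ (s + 2)) / D ^ s
    rcases eq_or_lt_of_le hu.1 with h0 | h0
    · simp [← h0, Real.zero_rpow (by positivity : s + 1 ≠ 0),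
        Real.zero_rpow (by positivity : s + 2 ≠ 0), Real.zero_rpow hs.ne']
    · have e1 : (u / D) ^ s = u ^ s / D ^ s := Real.div_rpow h0.le hD.le s
      have e2 : u ^ (s + 1) = u ^ s * u := Real.rpow_add_one h0.ne' s
      have e3 : u ^ (s + 2) = u ^ s * u * u := by
        rw [show s + 2 = s + 1 + 1 by ring, Real.rpow_add_one h0.ne', e2]
      rw [e1, e2, e3]
      field_simp
  rw [step1]
  have i1 : IntervalIntegrable (fun u : ℝ => u ^ (s + 1)) volume 0 D :=
    intervalIntegrable_rpow' (by linarith)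
  have i2 : IntervalIntegrable (fun u : ℝ => u ^ (s + 2)) volume 0 D :=
    intervalIntegrable_rpow' (by linarith)
  rw [intervalIntegral.integral_div, intervalIntegral.integral_sub (i1.mul_const D) i2,
    intervalIntegral.integral_mul_const, integral_rpow (Or.inl (by linarith : (-1:ℝ) < s + 1)),
    integral_rpow (Or.inl (by linarith : (-1:ℝ) < s + 2))]
  rw [Real.zero_rpow (by positivity : s + 1 + 1 ≠ 0), Real.zero_rpow (by positivity : s + 2 + 1 ≠ 0)]
  have e2 : D ^ (s + 1 + 1) = D ^ s * D ^ (2:ℕ) := by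
    rw [show s + 1 + 1 = s + ((2:ℕ):ℝ) by push_cast; ring, Real.rpow_add hD, Real.rpow_natCast]
  have e3 : D ^ (s + 2 + 1) = D ^ s * D ^ (3:ℕ) := by
    rw [show s + 2 + 1 = s + ((3:ℕ):ℝ) by push_cast; ring, Real.rpow_add hD, Real.rpow_natCast]
  rw [e2, e3]
  field_simp
  ring

lemma kernel_int0' (D s : ℝ) (hD : 0 < D) (hs : 0 < s) :
    (∫ u in (0:ℝ)..D, u * (D - u) * ((D - u) / D) ^ s)
      = D ^ 3 / ((s + 2) * (s + 3)) := by
  have h := intervalIntegral.integral_comp_sub_left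
    (fun u => u * (D - u) * (u / D) ^ s) D (a := 0) (b := D)
  simp only [sub_sub_cancel, sub_self, sub_zero] at h
  rw [← kernel_int0 D s hD hs, ← h]
  apply intervalIntegral.integral_congr
  intro t ht
  show t * (D - t) * ((D - t) / D) ^ s = (D - t) * t * ((D - t) / D) ^ s
  ring

lemma kernel_int1 (c d s : ℝ) (hcd : c < d) (hs : 0 < s) :
    (∫ t in c..d, (t - c) * (d - t) * ((t - c) / (d - c)) ^ s)
      = (d - c) ^ 3 / ((s + 2) * (s + 3)) := by
  have h := intervalIntegral.integral_comp_sub_right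
    (fun u => u * ((d - c) - u) * (u / (d - c)) ^ s) c (a := c) (b := d)
  simp only [sub_self] at h
  rw [← kernel_int0 (d - c) s (by linarith) hs, ← h]
  apply intervalIntegral.integral_congr
  intro t ht
  show (t - c) * (d - t) * ((t - c) / (d - c)) ^ s
      = (t - c) * ((d - c) - (t - c)) * ((t - c) / (d - c)) ^ s
  ring

lemma kernel_int2 (c d s : ℝ) (hcd : c < d) (hs : 0 < s) :
    (∫ t in c..d, (t - c) * (d - t) * ((d - t) / (d - c)) ^ s)
      = (d - c) ^ 3 / ((s + 2) * (s + 3)) := by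
  have h := intervalIntegral.integral_comp_sub_right
    (fun u => u * ((d - c) - u) * (((d - c) - u) / (d - c)) ^ s) c (a := c) (b := d)
  simp only [sub_self] at h
  rw [← kernel_int0' (d - c) s (by linarith) hs, ← h]
  apply intervalIntegral.integral_congr
  intro t ht
  show (t - c) * (d - t) * ((d - t) / (d - c)) ^ s
      = (t - c) * ((d - c) - (t - c)) * (((d - c) - (t - c)) / (d - c)) ^ s
  have hb : (d - c) - (t - c) = d - t := by ring
  rw [hb]

lemma kernel_bound (f'' : ℝ → ℝ) (a b c d s : ℝ) (hcd : c < d)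
    (hac : a ≤ c) (hdb : d ≤ b) (hs0 : 0 < s) (hs1 : s ≤ 1)
    (hint : IntegrableOn f'' (Set.Icc a b))
    (hsc : ∀ u ∈ Set.Icc a b, ∀ v ∈ Set.Icc a b, ∀ t ∈ Set.Icc (0:ℝ) 1,
        |f'' (t * u + (1 - t) * v)| ≤ t ^ s * |f'' u| + (1 - t) ^ s * |f'' v|) :
    |∫ t in c..d, (t - c) * (d - t) * f'' t|
      ≤ (d - c) ^ 3 / ((s + 2) * (s + 3)) * (|f'' d| + |f'' c|) := by
  have hD : 0 < d - c := by linarith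
  have hf''I : IntervalIntegrable f'' volume c d := by
    rw [intervalIntegrable_iff_integrableOn_Icc_of_le hcd.le]
    exact hint.mono_set (Set.Icc_subset_Icc hac hdb)
  have hprod : IntervalIntegrable (fun t => (t - c) * (d - t) * f'' t) volume c d := by
    have := hf''I.continuousOn_mul
      (g := fun t => (t - c) * (d - t))
      (by fun_prop : Continuous fun t : ℝ => (t - c) * (d - t)).continuousOn
    exact this
  have habs : IntervalIntegrable (fun t => |(t - c) * (d - t) * f'' t|) volume c d := hprod.abs
  have crpow1 : Continuous fun t : ℝ => ((t - c) / (d - c)) ^ s :=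
    Continuous.rpow_const (by fun_prop) fun x => Or.inr hs0.le
  have crpow2 : Continuous fun t : ℝ => ((d - t) / (d - c)) ^ s :=
    Continuous.rpow_const (by fun_prop) fun x => Or.inr hs0.le
  have hg1 : Continuous fun t : ℝ => (t - c) * (d - t) * ((t - c) / (d - c)) ^ s := by
    exact ((continuous_id.sub continuous_const).mul (continuous_const.sub continuous_id)).mul crpow1
  have hg2 : Continuous fun t : ℝ => (t - c) * (d - t) * ((d - t) / (d - c)) ^ s := by
    exact ((continuous_id.sub continuous_const).mul (continuous_const.sub continuous_id)).mul crpow2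
  have hgint : IntervalIntegrable (fun t =>
      ((t - c) * (d - t) * ((t - c) / (d - c)) ^ s) * |f'' d|
        + ((t - c) * (d - t) * ((d - t) / (d - c)) ^ s) * |f'' c|) volume c d :=
    ((hg1.mul continuous_const).add (hg2.mul continuous_const)).intervalIntegrable c d
  have hpt : ∀ t ∈ Set.Icc c d,
      |(t - c) * (d - t) * f'' t|
        ≤ ((t - c) * (d - t) * ((t - c) / (d - c)) ^ s) * |f'' d|
          + ((t - c) * (d - t) * ((d - t) / (d - c)) ^ s) * |f'' c| := by
    intro t ht
    have h1 : (0:ℝ) ≤ t - c := by linarith [ht.1]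
    have h2 : (0:ℝ) ≤ d - t := by linarith [ht.2]
    have hτ0 : (0:ℝ) ≤ (t - c) / (d - c) := div_nonneg h1 hD.le
    have hτ1 : (t - c) / (d - c) ≤ 1 := (div_le_one hD).mpr (by linarith [ht.2])
    have hb := hsc d ⟨by linarith, hdb⟩ c ⟨hac, by linarith⟩
      ((t - c) / (d - c)) ⟨hτ0, hτ1⟩
    have harg : (t - c) / (d - c) * d + (1 - (t - c) / (d - c)) * c = t := by
      field_simp
      ring
    have h1τ : 1 - (t - c) / (d - c) = (d - t) / (d - c) := by
      field_simp
      ring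
    rw [harg, h1τ] at hb
    have habs : |(t - c) * (d - t) * f'' t| = (t - c) * (d - t) * |f'' t| := by
      rw [abs_mul, abs_mul, abs_of_nonneg h1, abs_of_nonneg h2]
    rw [habs]
    calc (t - c) * (d - t) * |f'' t|
        ≤ (t - c) * (d - t) * (((t - c) / (d - c)) ^ s * |f'' d|
            + ((d - t) / (d - c)) ^ s * |f'' c|) :=
          mul_le_mul_of_nonneg_left hb (mul_nonneg h1 h2)
      _ = ((t - c) * (d - t) * ((t - c) / (d - c)) ^ s) * |f'' d|
          + ((t - c) * (d - t) * ((d - t) / (d - c)) ^ s) * |f'' c| := by ring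
  calc |∫ t in c..d, (t - c) * (d - t) * f'' t|
      ≤ ∫ t in c..d, |(t - c) * (d - t) * f'' t| :=
        intervalIntegral.abs_integral_le_integral_abs hcd.le
    _ ≤ ∫ t in c..d, (((t - c) * (d - t) * ((t - c) / (d - c)) ^ s) * |f'' d|
          + ((t - c) * (d - t) * ((d - t) / (d - c)) ^ s) * |f'' c|) :=
        intervalIntegral.integral_mono_on hcd.le habs hgint hpt
    _ = (d - c) ^ 3 / ((s + 2) * (s + 3)) * (|f'' d| + |f'' c|) := by
        rw [intervalIntegral.integral_add ((hg1.intervalIntegrable c d).mul_const _)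
            ((hg2.intervalIntegrable c d).mul_const _),
          intervalIntegral.integral_mul_const, intervalIntegral.integral_mul_const,
          kernel_int1 c d s hcd hs0, kernel_int2 c d s hcd hs0]
        ring

theorem sconvex_alpha_beta_one (f f' f'' : ℝ → ℝ) (a b x s : ℝ)
    (hax : a < x) (hxb : x < b)
    (hs : s ∈ Set.Ioc (0:ℝ) 1)
    (hf' : ∀ t ∈ Set.Icc a b, HasDerivAt f (f' t) t)
    (hf'' : ∀ t ∈ Set.Icc a b, HasDerivAt f' (f'' t) t)
    (hint : IntegrableOn f'' (Set.Icc a b))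
    (hsc : ∀ u ∈ Set.Icc a b, ∀ v ∈ Set.Icc a b, ∀ t ∈ Set.Icc (0:ℝ) 1,
        |f'' (t * u + (1 - t) * v)| ≤ t ^ s * |f'' u| + (1 - t) ^ s * |f'' v|) :
    |f x + (f a + f b) / 2
        - (1 / (x - a) * ∫ t in a..x, f t + 1 / (b - x) * ∫ t in x..b, f t)|
      ≤ ((x - a) ^ 2 + (b - x) ^ 2) / (2 * (s + 2) * (s + 3)) * |f'' x|
        + 1 / (2 * (s + 2) * (s + 3))
            * ((x - a) ^ 2 * |f'' a| + (b - x) ^ 2 * |f'' b|) := by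
  obtain ⟨hs0, hs1⟩ := hs
  have hxa : (0:ℝ) < x - a := by linarith
  have hbx : (0:ℝ) < b - x := by linarith
  have hs2 : (0:ℝ) < s + 2 := by linarith
  have hs3 : (0:ℝ) < s + 3 := by linarith
  have hsubA : Set.Icc a x ⊆ Set.Icc a b := Set.Icc_subset_Icc le_rfl hxb.le
  have hsubB : Set.Icc x b ⊆ Set.Icc a b := Set.Icc_subset_Icc hax.le le_rfl
  have hintA : IntervalIntegrable f'' volume a x := by
    rw [intervalIntegrable_iff_integrableOn_Icc_of_le hax.le]
    exact hint.mono_set hsubA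
  have hintB : IntervalIntegrable f'' volume x b := by
    rw [intervalIntegrable_iff_integrableOn_Icc_of_le hxb.le]
    exact hint.mono_set hsubB
  have idA := parts_identity f f' f'' a x hax.le
    (fun t ht => hf' t (hsubA ht)) (fun t ht => hf'' t (hsubA ht)) hintA
  have idB := parts_identity f f' f'' x b hxb.le
    (fun t ht => hf' t (hsubB ht)) (fun t ht => hf'' t (hsubB ht)) hintB
  set A := ∫ t in a..x, (t - a) * (x - t) * f'' t with hA
  set B := ∫ t in x..b, (t - x) * (b - t) * f'' t with hB
  have key : f x + (f a + f b) / 2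
      - (1 / (x - a) * ∫ t in a..x, f t + 1 / (b - x) * ∫ t in x..b, f t)
      = A / (2 * (x - a)) + B / (2 * (b - x)) := by
    have h1 : x - a ≠ 0 := hxa.ne'
    have h2 : b - x ≠ 0 := hbx.ne'
    have hfintA : IntervalIntegrable f volume a x := by
      rw [intervalIntegrable_iff_integrableOn_Icc_of_le hax.le]
      exact (ContinuousOn.mono (fun t ht => (hf' t ht).continuousAt.continuousWithinAt)
        hsubA).integrableOn_Icc
    have split : (∫ t in a..x, f t + 1 / (b - x) * ∫ t in x..b, f t)
        = (∫ t in a..x, f t) + (x - a) * (1 / (b - x) * ∫ t in x..b, f t) := by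
      rw [intervalIntegral.integral_add hfintA intervalIntegrable_const,
        intervalIntegral.integral_const, smul_eq_mul]
    rw [split]
    have hIA : (∫ t in a..x, f t) = ((x - a) * (f a + f x) - A) / 2 := by linarith
    have hIB : (∫ t in x..b, f t) = ((b - x) * (f x + f b) - B) / 2 := by linarith
    rw [hIA, hIB]
    field_simp
    ring
  rw [key]
  have bA := kernel_bound f'' a b a x s hax le_rfl hxb.le hs0 hs1 hint hsc
  have bB := kernel_bound f'' a b x b s hxb hax.le le_rfl hs0 hs1 hint hsc
  calc |A / (2 * (x - a)) + B / (2 * (b - x))|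
      ≤ |A| / (2 * (x - a)) + |B| / (2 * (b - x)) := by
        refine (abs_add_le _ _).trans ?_
        rw [abs_div, abs_div, abs_of_pos (by linarith : (0:ℝ) < 2 * (x - a)),
          abs_of_pos (by linarith : (0:ℝ) < 2 * (b - x))]
    _ ≤ ((x - a) ^ 3 / ((s + 2) * (s + 3)) * (|f'' x| + |f'' a|)) / (2 * (x - a))
        + ((b - x) ^ 3 / ((s + 2) * (s + 3)) * (|f'' b| + |f'' x|)) / (2 * (b - x)) := by
        gcongr
    _ = ((x - a) ^ 2 + (b - x) ^ 2) / (2 * (s + 2) * (s + 3)) * |f'' x|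
        + 1 / (2 * (s + 2) * (s + 3))
            * ((x - a) ^ 2 * |f'' a| + (b - x) ^ 2 * |f'' b|) := by
        field_simp
        ring
end

section
/- Let f : [a,b] → ℝ be absolutely continuous with f'' ∈ L¹[a,b] and |f''| s-convex in the second sense on [a,b] for some s ∈ (0,1]. Then the following Bullen-type inequality holds: |(1/2)[f((a+b)/2) + (f(a)+f(b))/2] - (1/(b-a))∫_a^b f(t)dt| ≤ ((b-a)²/(8(s+2)(s+3)))·[|f''((a+b)/2)| + (|f''(a)| + |f''(b)|)/2]. -/
open MeasureTheory Set intervalIntegral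

lemma bullen_aux_int {s : ℝ} (hs : 0 < s) :
    ∫ t in (0:ℝ)..1, t * (1 - t) * t ^ s = 1 / ((s + 2) * (s + 3)) := by
  have h1 : ∀ t ∈ Set.uIcc (0:ℝ) 1, t * (1 - t) * t ^ s = t ^ (s+1) - t ^ (s+2) := by
    intro t ht
    rw [Set.uIcc_of_le (by norm_num)] at ht
    have ht0 : 0 ≤ t := ht.1
    have e1 : t ^ (s+1) = t ^ s * t := by
      rw [Real.rpow_add' ht0 (by linarith), Real.rpow_one]
    have e2 : t ^ (s+2) = t ^ s * t * t := by
      have h : s + 2 = (s+1) + 1 := by ring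
      rw [h, Real.rpow_add' ht0 (by linarith), Real.rpow_one, e1]
    rw [e1, e2]; ring
  rw [intervalIntegral.integral_congr h1,
    intervalIntegral.integral_sub (intervalIntegrable_rpow' (by linarith))
      (intervalIntegrable_rpow' (by linarith)),
    integral_rpow (Or.inl (by linarith)), integral_rpow (Or.inl (by linarith)),
    Real.one_rpow, Real.one_rpow, Real.zero_rpow (by linarith), Real.zero_rpow (by linarith)]
  have h2 : s + 2 ≠ 0 := by linarith
  have h3 : s + 3 ≠ 0 := by linarith
  have h1' : s + 1 + 1 = s + 2 := by ring
  have h2' : s + 2 + 1 = s + 3 := by ring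
  rw [h1', h2']
  field_simp
  ring

lemma bullen_ftc_half (f f' f'' : ℝ → ℝ) (c d : ℝ) (hcd : c ≤ d)
    (hf' : ∀ x ∈ Set.Icc c d, HasDerivAt f (f' x) x)
    (hf'' : ∀ x ∈ Set.Icc c d, HasDerivAt f' (f'' x) x)
    (hint : IntegrableOn f'' (Set.Icc c d))
    (hfc : ContinuousOn f (Set.Icc c d)) :
    ∫ x in c..d, (x - c) * (d - x) * f'' x
      = (d - c) * f c + (d - c) * f d - 2 * ∫ x in c..d, f x := by
  have huIcc : Set.uIcc c d = Set.Icc c d := Set.uIcc_of_le hcd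
  have hK : ContinuousOn (fun x => (x - c) * (d - x)) (Set.Icc c d) := by fun_prop
  have hKf'' : IntervalIntegrable (fun x => (x - c) * (d - x) * f'' x) volume c d := by
    apply IntegrableOn.intervalIntegrable
    rw [huIcc]
    exact IntegrableOn.continuousOn_mul hK hint isCompact_Icc
  have hfI : IntervalIntegrable f volume c d := by
    apply IntegrableOn.intervalIntegrable
    rw [huIcc]
    exact hfc.integrableOn_compact isCompact_Icc
  have hder : ∀ x ∈ Set.uIcc c d,
      HasDerivAt (fun x => (x - c) * (d - x) * f' x - (c + d - 2*x) * f x)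
        ((x - c) * (d - x) * f'' x + 2 * f x) x := by
    intro x hx
    rw [huIcc] at hx
    have h1 : HasDerivAt (fun x => (x - c) * (d - x)) (c + d - 2*x) x := by
      have := ((hasDerivAt_id x).sub_const c).mul ((hasDerivAt_const x d).sub (hasDerivAt_id x))
      exact this.congr_deriv (by simp; ring)
    have h2 : HasDerivAt (fun x : ℝ => c + d - 2*x) (-2) x := by
      have := (hasDerivAt_const x (c+d)).sub ((hasDerivAt_id x).const_mul 2)
      exact this.congr_deriv (by ring)
    have := (h1.mul (hf'' x hx)).sub (h2.mul (hf' x hx))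
    exact this.congr_deriv (by ring)
  have hFTC := intervalIntegral.integral_eq_sub_of_hasDerivAt hder
    (hKf''.add (hfI.const_mul 2))
  have heq : ∫ x in c..d, ((x - c) * (d - x) * f'' x + 2 * f x)
      = (∫ x in c..d, (x - c) * (d - x) * f'' x) + 2 * ∫ x in c..d, f x := by
    rw [intervalIntegral.integral_add hKf'' (hfI.const_mul 2),
      intervalIntegral.integral_const_mul]
  rw [heq] at hFTC
  have : (fun x => (x - c) * (d - x) * f' x - (c + d - 2*x) * f x) d
      - (fun x => (x - c) * (d - x) * f' x - (c + d - 2*x) * f x) c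
      = (d - c) * f c + (d - c) * f d := by
    simp only
    ring
  rw [this] at hFTC
  linarith
lemma bullen_bound_half (f'' : ℝ → ℝ) (c d s : ℝ) (hcd : c < d) (hs0 : 0 < s)
    (hint : IntegrableOn f'' (Set.Icc c d))
    (hptw : ∀ x ∈ Set.Icc c d,
      |f'' x| ≤ ((d - x)/(d - c)) ^ s * |f'' c| + ((x - c)/(d - c)) ^ s * |f'' d|) :
    |∫ x in c..d, (x - c) * (d - x) * f'' x|
      ≤ (d - c)^3 * (|f'' c| + |f'' d|) / ((s + 2) * (s + 3)) := by
  set A := |f'' c| with hA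
  set D := |f'' d| with hD
  have hh : (0:ℝ) < d - c := by linarith
  have huIcc : Set.uIcc c d = Set.Icc c d := Set.uIcc_of_le hcd.le
  have hrpow : Continuous (fun y : ℝ => y ^ s) :=
    continuous_iff_continuousAt.2 fun y => Real.continuousAt_rpow_const y s (Or.inr hs0.le)
  have hK : ContinuousOn (fun x => (x - c) * (d - x)) (Set.Icc c d) := by fun_prop
  have hKf'' : IntervalIntegrable (fun x => (x - c) * (d - x) * f'' x) volume c d := by
    apply IntegrableOn.intervalIntegrable; rw [huIcc]
    exact IntegrableOn.continuousOn_mul hK hint isCompact_Icc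
  have hGc : Continuous (fun x : ℝ =>
      (x - c) * (d - x) * (((d - x)/(d - c)) ^ s * A + ((x - c)/(d - c)) ^ s * D)) := by
    apply Continuous.mul (by fun_prop)
    exact ((hrpow.comp (by fun_prop)).mul continuous_const).add
      ((hrpow.comp (by fun_prop)).mul continuous_const)
  have step1 : |∫ x in c..d, (x - c) * (d - x) * f'' x|
      ≤ ∫ x in c..d, |(x - c) * (d - x) * f'' x| :=
    intervalIntegral.abs_integral_le_integral_abs hcd.le
  have step2 : ∫ x in c..d, |(x - c) * (d - x) * f'' x|
      ≤ ∫ x in c..d, (x - c) * (d - x) * (((d - x)/(d - c)) ^ s * A + ((x - c)/(d - c)) ^ s * D) := by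
    apply intervalIntegral.integral_mono_on hcd.le hKf''.abs (hGc.intervalIntegrable c d)
    intro x hx
    have hx1 : 0 ≤ x - c := by linarith [hx.1]
    have hx2 : 0 ≤ d - x := by linarith [hx.2]
    have hKnn : 0 ≤ (x - c) * (d - x) := mul_nonneg hx1 hx2
    calc |(x - c) * (d - x) * f'' x| = (x - c) * (d - x) * |f'' x| := by
          rw [abs_mul, abs_of_nonneg hKnn]
      _ ≤ _ := mul_le_mul_of_nonneg_left (hptw x hx) hKnn
  have hne : (-1/(d-c)) ≠ 0 := (div_neg_of_neg_of_pos (by norm_num) hh).ne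
  have key : ∀ x : ℝ,
      (x - c) * (d - x) * (((d - x)/(d - c)) ^ s * A + ((x - c)/(d - c)) ^ s * D)
      = (fun t => (d-c)^2 * (t * (1 - t) * (t ^ s * A + (1 - t) ^ s * D)))
          ((-1/(d-c)) * x + d/(d-c)) := by
    intro x
    have harg : (-1/(d-c)) * x + d/(d-c) = (d-x)/(d-c) := by field_simp; ring
    rw [harg]
    have h1m : 1 - (d-x)/(d-c) = (x-c)/(d-c) := by field_simp; ring
    simp only
    rw [h1m]
    field_simp
  have hcv : ∫ x in c..d, (x - c)*(d - x)*(((d - x)/(d - c))^s*A + ((x - c)/(d - c))^s*D)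
      = (d - c) * ∫ t in (0:ℝ)..1, (d-c)^2 * (t*(1-t)*(t^s*A + (1-t)^s*D)) := by
    have e1 : (-1/(d-c))*c + d/(d-c) = 1 := by field_simp; ring
    have e2 : (-1/(d-c))*d + d/(d-c) = 0 := by field_simp; ring
    have hcomp : ∫ x in c..d, (fun t => (d-c)^2 * (t * (1 - t) * (t ^ s * A + (1 - t) ^ s * D)))
          ((-1/(d-c)) * x + d/(d-c))
        = (-1/(d-c))⁻¹ • ∫ t in ((-1/(d-c))*c + d/(d-c))..((-1/(d-c))*d + d/(d-c)),
            (d-c)^2 * (t*(1-t)*(t^s*A + (1-t)^s*D)) :=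
      intervalIntegral.integral_comp_mul_add
        (fun t => (d-c)^2 * (t * (1 - t) * (t ^ s * A + (1 - t) ^ s * D))) hne (d/(d-c))
    rw [e1, e2] at hcomp
    rw [intervalIntegral.integral_congr (g := fun x =>
        (fun t => (d-c)^2 * (t * (1 - t) * (t ^ s * A + (1 - t) ^ s * D)))
          ((-1/(d-c)) * x + d/(d-c))) (fun x _ => key x), hcomp,
      intervalIntegral.integral_symm, smul_eq_mul]
    have : (-1/(d-c))⁻¹ = -(d-c) := by field_simp
    rw [this]
    ring
  have hrefl : ∫ t in (0:ℝ)..1, t*(1-t)*(1-t)^s = ∫ t in (0:ℝ)..1, t*(1-t)*t^s := by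
    have h := intervalIntegral.integral_comp_sub_left (a := (0:ℝ)) (b := 1) (fun u : ℝ => (1-u)*u*u^s) 1
    simp only [sub_sub_cancel] at h
    norm_num at h
    rw [h]
    exact intervalIntegral.integral_congr (fun x _ => by ring)
  have hi1 : IntervalIntegrable (fun t : ℝ => t*(1-t)*t^s) volume 0 1 :=
    ((by fun_prop : Continuous fun t:ℝ => t*(1-t)).mul hrpow).intervalIntegrable 0 1
  have hi2 : IntervalIntegrable (fun t : ℝ => t*(1-t)*(1-t)^s) volume 0 1 :=
    ((by fun_prop : Continuous fun t:ℝ => t*(1-t)).mul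
      (hrpow.comp (by fun_prop))).intervalIntegrable 0 1
  have hval : ∫ t in (0:ℝ)..1, (d-c)^2*(t*(1-t)*(t^s*A + (1-t)^s*D))
      = (d-c)^2 * ((A + D)/((s+2)*(s+3))) := by
    rw [intervalIntegral.integral_const_mul]
    congr 1
    have hsplit : ∀ t ∈ Set.uIcc (0:ℝ) 1,
        t*(1-t)*(t^s*A + (1-t)^s*D) = A*(t*(1-t)*t^s) + D*(t*(1-t)*(1-t)^s) :=
      fun t _ => by ring
    rw [intervalIntegral.integral_congr hsplit,
      intervalIntegral.integral_add (hi1.const_mul A) (hi2.const_mul D),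
      intervalIntegral.integral_const_mul, intervalIntegral.integral_const_mul,
      hrefl, bullen_aux_int hs0]
    field_simp
  calc |∫ x in c..d, (x - c) * (d - x) * f'' x|
      ≤ ∫ x in c..d, |(x - c) * (d - x) * f'' x| := step1
    _ ≤ _ := step2
    _ = (d - c) * ((d-c)^2 * ((A + D)/((s+2)*(s+3)))) := by rw [hcv, hval]
    _ = (d - c)^3 * (A + D) / ((s + 2) * (s + 3)) := by ring

theorem sconvex_bullen (f f' f'' : ℝ → ℝ) (a b s : ℝ)
    (hab : a < b)
    (hs : s ∈ Set.Ioc (0:ℝ) 1)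
    (hf' : ∀ t ∈ Set.Icc a b, HasDerivAt f (f' t) t)
    (hf'' : ∀ t ∈ Set.Icc a b, HasDerivAt f' (f'' t) t)
    (hint : IntegrableOn f'' (Set.Icc a b))
    (hsc : ∀ u ∈ Set.Icc a b, ∀ v ∈ Set.Icc a b, ∀ t ∈ Set.Icc (0:ℝ) 1,
        |f'' (t * u + (1 - t) * v)| ≤ t ^ s * |f'' u| + (1 - t) ^ s * |f'' v|) :
    |(1 / 2) * (f ((a + b) / 2) + (f a + f b) / 2) - (1 / (b - a)) * ∫ t in a..b, f t|
      ≤ ((b - a) ^ 2 / (8 * (s + 2) * (s + 3)))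
          * (|f'' ((a + b) / 2)| + (|f'' a| + |f'' b|) / 2) := by
  obtain ⟨hs0, hs1⟩ := hs
  set m : ℝ := (a + b) / 2 with hm
  have ham : a < m := by rw [hm]; linarith
  have hmb : m < b := by rw [hm]; linarith
  have hma : m - a = (b - a)/2 := by rw [hm]; ring
  have hbm : b - m = (b - a)/2 := by rw [hm]; ring
  have hba : (0:ℝ) < b - a := by linarith
  have hsub1 : Set.Icc a m ⊆ Set.Icc a b := Set.Icc_subset_Icc le_rfl hmb.le
  have hsub2 : Set.Icc m b ⊆ Set.Icc a b := Set.Icc_subset_Icc ham.le le_rfl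
  have hfc : ContinuousOn f (Set.Icc a b) := fun x hx =>
    (hf' x hx).continuousAt.continuousWithinAt
  have haI : a ∈ Set.Icc a b := Set.left_mem_Icc.2 hab.le
  have hbI : b ∈ Set.Icc a b := Set.right_mem_Icc.2 hab.le
  have hmI : m ∈ Set.Icc a b := ⟨ham.le, hmb.le⟩
  have I1 := bullen_ftc_half f f' f'' a m ham.le
    (fun x hx => hf' x (hsub1 hx)) (fun x hx => hf'' x (hsub1 hx))
    (hint.mono_set hsub1) (hfc.mono hsub1)
  have I2 := bullen_ftc_half f f' f'' m b hmb.le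
    (fun x hx => hf' x (hsub2 hx)) (fun x hx => hf'' x (hsub2 hx))
    (hint.mono_set hsub2) (hfc.mono hsub2)
  have hfi1 : IntervalIntegrable f volume a m := by
    apply IntegrableOn.intervalIntegrable
    rw [Set.uIcc_of_le ham.le]
    exact (hfc.mono hsub1).integrableOn_compact isCompact_Icc
  have hfi2 : IntervalIntegrable f volume m b := by
    apply IntegrableOn.intervalIntegrable
    rw [Set.uIcc_of_le hmb.le]
    exact (hfc.mono hsub2).integrableOn_compact isCompact_Icc
  have hsum : (∫ x in a..m, f x) + ∫ x in m..b, f x = ∫ t in a..b, f t :=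
    intervalIntegral.integral_add_adjacent_intervals hfi1 hfi2
  have hE : (1 / 2) * (f m + (f a + f b) / 2) - (1 / (b - a)) * ∫ t in a..b, f t
      = ((∫ x in a..m, (x - a) * (m - x) * f'' x) + ∫ x in m..b, (x - m) * (b - x) * f'' x)
        / (2 * (b - a)) := by
    rw [I1, I2, ← hsum, hma, hbm]
    field_simp
    ring
  -- pointwise s-convexity bounds on each half
  have hptw1 : ∀ x ∈ Set.Icc a m,
      |f'' x| ≤ ((m - x)/(m - a)) ^ s * |f'' a| + ((x - a)/(m - a)) ^ s * |f'' m| := by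
    intro x hx
    have hden : (0:ℝ) < m - a := by linarith
    have ht : (m - x)/(m - a) ∈ Set.Icc (0:ℝ) 1 := by
      constructor
      · apply div_nonneg (by linarith [hx.2]) hden.le
      · rw [div_le_one hden]; linarith [hx.1]
    have harg : ((m - x)/(m - a)) * a + (1 - (m - x)/(m - a)) * m = x := by
      field_simp; ring
    have h1t : 1 - (m - x)/(m - a) = (x - a)/(m - a) := by field_simp; ring
    have := hsc a haI m hmI _ ht
    rw [harg, h1t] at this
    exact this
  have hptw2 : ∀ x ∈ Set.Icc m b,
      |f'' x| ≤ ((b - x)/(b - m)) ^ s * |f'' m| + ((x - m)/(b - m)) ^ s * |f'' b| := by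
    intro x hx
    have hden : (0:ℝ) < b - m := by linarith
    have ht : (b - x)/(b - m) ∈ Set.Icc (0:ℝ) 1 := by
      constructor
      · apply div_nonneg (by linarith [hx.2]) hden.le
      · rw [div_le_one hden]; linarith [hx.1]
    have harg : ((b - x)/(b - m)) * m + (1 - (b - x)/(b - m)) * b = x := by
      field_simp; ring
    have h1t : 1 - (b - x)/(b - m) = (x - m)/(b - m) := by field_simp; ring
    have := hsc m hmI b hbI _ ht
    rw [harg, h1t] at this
    exact this
  have B1 := bullen_bound_half f'' a m s ham hs0 (hint.mono_set hsub1) hptw1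
  have B2 := bullen_bound_half f'' m b s hmb hs0 (hint.mono_set hsub2) hptw2
  have hQ : (0:ℝ) < (s + 2) * (s + 3) := by nlinarith
  calc |(1 / 2) * (f m + (f a + f b) / 2) - (1 / (b - a)) * ∫ t in a..b, f t|
      = |(∫ x in a..m, (x - a) * (m - x) * f'' x) + ∫ x in m..b, (x - m) * (b - x) * f'' x|
        / (2 * (b - a)) := by rw [hE, abs_div, abs_of_pos (show (0:ℝ) < 2*(b-a) by linarith)]
    _ ≤ (|∫ x in a..m, (x - a) * (m - x) * f'' x| + |∫ x in m..b, (x - m) * (b - x) * f'' x|)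
        / (2 * (b - a)) := by gcongr; exact abs_add_le _ _
    _ ≤ ((m - a)^3 * (|f'' a| + |f'' m|) / ((s + 2) * (s + 3))
          + (b - m)^3 * (|f'' m| + |f'' b|) / ((s + 2) * (s + 3))) / (2 * (b - a)) := by
        gcongr
    _ = ((b - a) ^ 2 / (8 * (s + 2) * (s + 3)))
          * (|f'' m| + (|f'' a| + |f'' b|) / 2) := by
        rw [hma, hbm]
        field_simp
        ring
end

section
/- Let f : [a,b] → ℝ be absolutely continuous with f'' ∈ L¹[a,b], and suppose |f''| is positive and log-convex on [a,b]. Let κ₁ = (|f''((a+b)/2)|/|f''(a)|)^{2/(b-a)} and τ₁ = (|f''(b)|/|f''((a+b)/2)|)^{2/(b-a)}, with κ₁ ≠ 1, τ₁ ≠ 1. Then the Bullen-type inequality holds: |(1/2)[f((a+b)/2) + (f(a)+f(b))/2] - (1/(b-a))∫_a^b f(t)dt| ≤ (|f''(a)|^{(a+b)/2}/|f''((a+b)/2)|^a)^{2/(b-a)}·(κ₁^a - κ₁^{(a+b)/2} + ((b-a)/4)(κ₁^a + κ₁^{(a+b)/2})log κ₁)/((b-a)log³ κ₁) + (|f''((a+b)/2)|^b/|f''(b)|^{(a+b)/2})^{2/(b-a)}·(τ₁^{(a+b)/2}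 - τ₁^b + ((b-a)/4)(τ₁^b + τ₁^{(a+b)/2})log τ₁)/((b-a)log³ τ₁). -/
open MeasureTheory Set intervalIntegral Real

private lemma ibp2 {f f' f'' : ℝ → ℝ} {c d : ℝ} (p q r : ℝ) (hcd : c ≤ d)
    (hf' : ∀ x ∈ Set.Icc c d, HasDerivAt f (f' x) x)
    (hf'' : ∀ x ∈ Set.Icc c d, HasDerivAt f' (f'' x) x)
    (hint : IntervalIntegrable f'' MeasureTheory.volume c d) :
    ∫ t in c..d, (p * t ^ 2 + q * t + r) * f'' t
      = (p * d ^ 2 + q * d + r) * f' d - (p * c ^ 2 + q * c + r) * f' c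
        - ((2 * p * d + q) * f d - (2 * p * c + q) * f c)
        + (2 * p) * ∫ t in c..d, f t := by
  have huIcc : Set.uIcc c d = Set.Icc c d := Set.uIcc_of_le hcd
  have hpoly : ∀ x : ℝ, HasDerivAt (fun t => p * t ^ 2 + q * t + r) (2 * p * x + q) x := by
    intro x
    have hx2 : HasDerivAt (fun t : ℝ => t ^ 2) (2 * x) x := by
      simpa using hasDerivAt_pow 2 x
    have h1 : HasDerivAt (fun t : ℝ => p * t ^ 2 + q * t + r) (p * (2 * x) + q * 1) x :=
      ((hx2.const_mul p).add ((hasDerivAt_id x).const_mul q)).add_const r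
    have e : p * (2 * x) + q * 1 = 2 * p * x + q := by ring
    rw [e] at h1
    exact h1
  have hlin : ∀ x : ℝ, HasDerivAt (fun t => 2 * p * t + q) (2 * p) x := by
    intro x
    simpa using ((hasDerivAt_id x).const_mul (2 * p)).add_const q
  have hcf' : ContinuousOn f' (Set.uIcc c d) := by
    rw [huIcc]; exact fun x hx => (hf'' x hx).continuousAt.continuousWithinAt
  have h1 : ∫ t in c..d, (p * t ^ 2 + q * t + r) * f'' t
      = (p * d ^ 2 + q * d + r) * f' d - (p * c ^ 2 + q * c + r) * f' c
        - ∫ t in c..d, (2 * p * t + q) * f' t :=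
    intervalIntegral.integral_mul_deriv_eq_deriv_mul
      (fun x _ => hpoly x) (fun x hx => hf'' x (huIcc ▸ hx))
      (Continuous.intervalIntegrable (by fun_prop) _ _) hint
  have h2 : ∫ t in c..d, (2 * p * t + q) * f' t
      = (2 * p * d + q) * f d - (2 * p * c + q) * f c - ∫ t in c..d, 2 * p * f t :=
    intervalIntegral.integral_mul_deriv_eq_deriv_mul
      (fun x _ => hlin x) (fun x hx => hf' x (huIcc ▸ hx))
      (Continuous.intervalIntegrable (by fun_prop) _ _)
      (hcf'.intervalIntegrable)
  rw [h1, h2, intervalIntegral.integral_const_mul]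
  ring

private lemma exp_int (p q r L c d : ℝ) (hL : L ≠ 0) :
    ∫ t in c..d, (p * t ^ 2 + q * t + r) * Real.exp (L * t)
      = Real.exp (L * d) * ((p * d ^ 2 + q * d + r) / L - (2 * p * d + q) / L ^ 2 + 2 * p / L ^ 3)
        - Real.exp (L * c) * ((p * c ^ 2 + q * c + r) / L - (2 * p * c + q) / L ^ 2 + 2 * p / L ^ 3) := by
  have key : ∀ x : ℝ, HasDerivAt
      (fun t => Real.exp (L * t) * ((p * t ^ 2 + q * t + r) / L - (2 * p * t + q) / L ^ 2 + 2 * p / L ^ 3))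
      ((p * x ^ 2 + q * x + r) * Real.exp (L * x)) x := by
    intro x
    have he : HasDerivAt (fun t => Real.exp (L * t)) (Real.exp (L * x) * L) x := by
      simpa using ((hasDerivAt_id' x).const_mul L).exp
    have hx2 : HasDerivAt (fun t : ℝ => t ^ 2) (2 * x) x := by
      simpa using hasDerivAt_pow 2 x
    have hq1 : HasDerivAt (fun t : ℝ => (p * t ^ 2 + q * t + r) / L) ((2 * p * x + q) / L) x := by
      have h1 : HasDerivAt (fun t : ℝ => (p * t ^ 2 + q * t + r) / L) ((p * (2 * x) + q * 1) / L) x :=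
        (((hx2.const_mul p).add ((hasDerivAt_id x).const_mul q)).add_const r).div_const L
      have e : (p * (2 * x) + q * 1) / L = (2 * p * x + q) / L := by ring
      rw [e] at h1
      exact h1
    have hq2 : HasDerivAt (fun t : ℝ => (2 * p * t + q) / L ^ 2) ((2 * p) / L ^ 2) x := by
      have h1 : HasDerivAt (fun t : ℝ => (2 * p * t + q) / L ^ 2) ((2 * p) * 1 / L ^ 2) x :=
        (((hasDerivAt_id x).const_mul (2 * p)).add_const q).div_const (L ^ 2)
      have e : (2 * p) * 1 / L ^ 2 = (2 * p) / L ^ 2 := by ring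
      rw [e] at h1
      exact h1
    have h := he.mul ((hq1.sub hq2).add_const (2 * p / L ^ 3))
    convert h using 1
    · rfl
    · rfl
    · rfl
    simp only [Pi.sub_apply]
    field_simp
    ring
  rw [intervalIntegral.integral_eq_sub_of_hasDerivAt (fun x _ => key x)
    (Continuous.intervalIntegrable (by fun_prop) _ _)]

set_option maxHeartbeats 2000000

theorem logconvex_bullen (f f' f'' : ℝ → ℝ) (a b κ₁ τ₁ : ℝ)
    (hab : a < b)
    (hf' : ∀ t ∈ Set.Icc a b, HasDerivAt f (f' t) t)
    (hf'' : ∀ t ∈ Set.Icc a b, HasDerivAt f' (f'' t) t)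
    (hint : IntegrableOn f'' (Set.Icc a b))
    (hpos : ∀ t ∈ Set.Icc a b, 0 < |f'' t|)
    (hlc : ∀ u ∈ Set.Icc a b, ∀ v ∈ Set.Icc a b, ∀ l ∈ Set.Icc (0:ℝ) 1,
        |f'' (l * u + (1 - l) * v)| ≤ |f'' u| ^ l * |f'' v| ^ (1 - l))
    (hκ : κ₁ = (|f'' ((a + b) / 2)| / |f'' a|) ^ (2 / (b - a)))
    (hτ : τ₁ = (|f'' b| / |f'' ((a + b) / 2)|) ^ (2 / (b - a)))
    (hκ1 : κ₁ ≠ 1) (hτ1 : τ₁ ≠ 1) :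
    |(1 / 2) * (f ((a + b) / 2) + (f a + f b) / 2) - (1 / (b - a)) * ∫ t in a..b, f t|
      ≤ (|f'' a| ^ ((a + b) / 2) / |f'' ((a + b) / 2)| ^ a) ^ (2 / (b - a))
            * ((κ₁ ^ a - κ₁ ^ ((a + b) / 2)
                + ((b - a) / 4) * (κ₁ ^ a + κ₁ ^ ((a + b) / 2)) * Real.log κ₁)
                / ((b - a) * (Real.log κ₁) ^ 3))
        + (|f'' ((a + b) / 2)| ^ b / |f'' b| ^ ((a + b) / 2)) ^ (2 / (b - a))
            * ((τ₁ ^ ((a + b) / 2) - τ₁ ^ b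
                + ((b - a) / 4) * (τ₁ ^ b + τ₁ ^ ((a + b) / 2)) * Real.log τ₁)
                / ((b - a) * (Real.log τ₁) ^ 3)) := by
  have hba : (0:ℝ) < b - a := by linarith
  have hne : b - a ≠ 0 := hba.ne'
  have hne' : -a + b ≠ 0 := by intro h; apply hne; linarith
  have hne2 : b * 2 - a * 2 ≠ 0 := by intro h; apply hne; linarith
  have hm1 : a ≤ (a + b) / 2 := by linarith
  have hm2 : (a + b) / 2 ≤ b := by linarith
  have ham : a ∈ Set.Icc a b := ⟨le_rfl, hab.le⟩
  have hmm : (a + b) / 2 ∈ Set.Icc a b := ⟨hm1, hm2⟩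
  have hbm : b ∈ Set.Icc a b := ⟨hab.le, le_rfl⟩
  have Pa := hpos a ham
  have Pm := hpos ((a + b) / 2) hmm
  have Pb := hpos b hbm
  set La := Real.log |f'' a| with hLadef
  set Lm := Real.log |f'' ((a + b) / 2)| with hLmdef
  set Lb := Real.log |f'' b| with hLbdef
  have ea : |f'' a| = Real.exp La := (Real.exp_log Pa).symm
  have em : |f'' ((a + b) / 2)| = Real.exp Lm := (Real.exp_log Pm).symm
  have eb : |f'' b| = Real.exp Lb := (Real.exp_log Pb).symm
  set L1 := 2 / (b - a) * (Lm - La) with hL1def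
  set L2 := 2 / (b - a) * (Lb - Lm) with hL2def
  have hκe : κ₁ = Real.exp L1 := by
    rw [hκ, ea, em, ← Real.exp_sub, ← Real.exp_mul]
    congr 1
    rw [hL1def]; ring
  have hτe : τ₁ = Real.exp L2 := by
    rw [hτ, eb, em, ← Real.exp_sub, ← Real.exp_mul]
    congr 1
    rw [hL2def]; ring
  have hlogκ : Real.log κ₁ = L1 := by rw [hκe, Real.log_exp]
  have hlogτ : Real.log τ₁ = L2 := by rw [hτe, Real.log_exp]
  have hL1ne : L1 ≠ 0 := by
    intro h; exact hκ1 (by rw [hκe, h, Real.exp_zero])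
  have hL2ne : L2 ≠ 0 := by
    intro h; exact hτ1 (by rw [hτe, h, Real.exp_zero])
  have hκpow : ∀ t : ℝ, κ₁ ^ t = Real.exp (L1 * t) := by
    intro t; rw [hκe, ← Real.exp_mul]
  have hτpow : ∀ t : ℝ, τ₁ ^ t = Real.exp (L2 * t) := by
    intro t; rw [hτe, ← Real.exp_mul]
  have hAe : (|f'' a| ^ ((a + b) / 2) / |f'' ((a + b) / 2)| ^ a) ^ (2 / (b - a))
      = Real.exp ((La * ((a + b) / 2) - Lm * a) * (2 / (b - a))) := by
    rw [ea, em, ← Real.exp_mul, ← Real.exp_mul, ← Real.exp_sub, ← Real.exp_mul]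
  have hBe : (|f'' ((a + b) / 2)| ^ b / |f'' b| ^ ((a + b) / 2)) ^ (2 / (b - a))
      = Real.exp ((Lm * b - Lb * ((a + b) / 2)) * (2 / (b - a))) := by
    rw [em, eb, ← Real.exp_mul, ← Real.exp_mul, ← Real.exp_sub, ← Real.exp_mul]
  clear_value La Lm Lb L1 L2
  -- pointwise bounds
  have hbd1 : ∀ t ∈ Set.Icc a ((a + b) / 2),
      |f'' t| ≤ Real.exp ((La * ((a + b) / 2) - Lm * a) * (2 / (b - a))) * Real.exp (L1 * t) := by
    intro t ht
    have hl0 : 0 ≤ (a + b - 2 * t) / (b - a) := div_nonneg (by linarith [ht.2]) hba.le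
    have hl1 : (a + b - 2 * t) / (b - a) ≤ 1 := by
      rw [div_le_one hba]; linarith [ht.1]
    have hconv : ((a + b - 2 * t) / (b - a)) * a
        + (1 - (a + b - 2 * t) / (b - a)) * ((a + b) / 2) = t := by
      field_simp
      ring
    have h := hlc a ham ((a + b) / 2) hmm _ ⟨hl0, hl1⟩
    rw [hconv] at h
    refine h.trans (le_of_eq ?_)
    rw [ea, em, ← Real.exp_mul, ← Real.exp_mul, ← Real.exp_add, ← Real.exp_add]
    congr 1
    rw [hL1def]
    field_simp
    ring
  have hbd2 : ∀ t ∈ Set.Icc ((a + b) / 2) b,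
      |f'' t| ≤ Real.exp ((Lm * b - Lb * ((a + b) / 2)) * (2 / (b - a))) * Real.exp (L2 * t) := by
    intro t ht
    have hl0 : 0 ≤ (2 * b - 2 * t) / (b - a) := div_nonneg (by linarith [ht.2]) hba.le
    have hl1 : (2 * b - 2 * t) / (b - a) ≤ 1 := by
      rw [div_le_one hba]; linarith [ht.1]
    have hconv : ((2 * b - 2 * t) / (b - a)) * ((a + b) / 2)
        + (1 - (2 * b - 2 * t) / (b - a)) * b = t := by
      field_simp
      ring
    have h := hlc ((a + b) / 2) hmm b hbm _ ⟨hl0, hl1⟩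
    rw [hconv] at h
    refine h.trans (le_of_eq ?_)
    rw [em, eb, ← Real.exp_mul, ← Real.exp_mul, ← Real.exp_add, ← Real.exp_add]
    congr 1
    rw [hL2def]
    field_simp
    ring
  -- kernel identities
  have hsub1 : Set.Icc a ((a + b) / 2) ⊆ Set.Icc a b := Set.Icc_subset_Icc le_rfl hm2
  have hsub2 : Set.Icc ((a + b) / 2) b ⊆ Set.Icc a b := Set.Icc_subset_Icc hm1 le_rfl
  have hint1 : IntervalIntegrable f'' MeasureTheory.volume a ((a + b) / 2) :=
    (intervalIntegrable_iff_integrableOn_Icc_of_le hm1).mpr (hint.mono_set hsub1)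
  have hint2 : IntervalIntegrable f'' MeasureTheory.volume ((a + b) / 2) b :=
    (intervalIntegrable_iff_integrableOn_Icc_of_le hm2).mpr (hint.mono_set hsub2)
  have hid1 := ibp2 (f := f) (f' := f') (f'' := f'') (-(1 / (2 * (b - a))))
    ((a + (a + b) / 2) / (2 * (b - a))) (-(a * ((a + b) / 2)) / (2 * (b - a))) hm1
    (fun x hx => hf' x (hsub1 hx)) (fun x hx => hf'' x (hsub1 hx)) hint1
  have hid2 := ibp2 (f := f) (f' := f') (f'' := f'') (-(1 / (2 * (b - a))))
    (((a + b) / 2 + b) / (2 * (b - a))) (-(((a + b) / 2) * b) / (2 * (b - a))) hm2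
    (fun x hx => hf' x (hsub2 hx)) (fun x hx => hf'' x (hsub2 hx)) hint2
  have hcf : ContinuousOn f (Set.Icc a b) :=
    fun x hx => (hf' x hx).continuousAt.continuousWithinAt
  have hfint1 : IntervalIntegrable f MeasureTheory.volume a ((a + b) / 2) := by
    apply ContinuousOn.intervalIntegrable
    rw [Set.uIcc_of_le hm1]; exact hcf.mono hsub1
  have hfint2 : IntervalIntegrable f MeasureTheory.volume ((a + b) / 2) b := by
    apply ContinuousOn.intervalIntegrable
    rw [Set.uIcc_of_le hm2]; exact hcf.mono hsub2
  have hsplit : ∫ t in a..b, f t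
      = (∫ t in a..((a + b) / 2), f t) + ∫ t in ((a + b) / 2)..b, f t :=
    (intervalIntegral.integral_add_adjacent_intervals hfint1 hfint2).symm
  have hid1' : (∫ t in a..((a + b) / 2), (-(1 / (2 * (b - a))) * t ^ 2
        + (a + (a + b) / 2) / (2 * (b - a)) * t + -(a * ((a + b) / 2)) / (2 * (b - a))) * f'' t)
      = (1 / 4) * f ((a + b) / 2) + (1 / 4) * f a - (1 / (b - a)) * ∫ t in a..((a + b) / 2), f t := by
    rw [hid1]
    field_simp
    ring
  have hid2' : (∫ t in ((a + b) / 2)..b, (-(1 / (2 * (b - a))) * t ^ 2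
        + ((a + b) / 2 + b) / (2 * (b - a)) * t + -(((a + b) / 2) * b) / (2 * (b - a))) * f'' t)
      = (1 / 4) * f b + (1 / 4) * f ((a + b) / 2) - (1 / (b - a)) * ∫ t in ((a + b) / 2)..b, f t := by
    rw [hid2]
    field_simp
    ring
  have hX : (1 / 2) * (f ((a + b) / 2) + (f a + f b) / 2) - (1 / (b - a)) * ∫ t in a..b, f t
      = (∫ t in a..((a + b) / 2), (-(1 / (2 * (b - a))) * t ^ 2
            + (a + (a + b) / 2) / (2 * (b - a)) * t + -(a * ((a + b) / 2)) / (2 * (b - a))) * f'' t)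
        + ∫ t in ((a + b) / 2)..b, (-(1 / (2 * (b - a))) * t ^ 2
            + ((a + b) / 2 + b) / (2 * (b - a)) * t + -(((a + b) / 2) * b) / (2 * (b - a))) * f'' t := by
    rw [hid1', hid2', hsplit]
    ring
  rw [hX]
  have key1 : |∫ t in a..((a + b) / 2), (-(1 / (2 * (b - a))) * t ^ 2
        + (a + (a + b) / 2) / (2 * (b - a)) * t + -(a * ((a + b) / 2)) / (2 * (b - a))) * f'' t|
      ≤ (|f'' a| ^ ((a + b) / 2) / |f'' ((a + b) / 2)| ^ a) ^ (2 / (b - a))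
            * ((κ₁ ^ a - κ₁ ^ ((a + b) / 2)
                + ((b - a) / 4) * (κ₁ ^ a + κ₁ ^ ((a + b) / 2)) * Real.log κ₁)
                / ((b - a) * (Real.log κ₁) ^ 3)) := by
    have hPf : IntervalIntegrable (fun t => (-(1 / (2 * (b - a))) * t ^ 2
        + (a + (a + b) / 2) / (2 * (b - a)) * t + -(a * ((a + b) / 2)) / (2 * (b - a))) * f'' t)
        MeasureTheory.volume a ((a + b) / 2) :=
      hint1.continuousOn_mul (by fun_prop)
    have hmono : (∫ t in a..((a + b) / 2), |(-(1 / (2 * (b - a))) * t ^ 2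
          + (a + (a + b) / 2) / (2 * (b - a)) * t + -(a * ((a + b) / 2)) / (2 * (b - a))) * f'' t|)
        ≤ ∫ t in a..((a + b) / 2), (-(1 / (2 * (b - a))) * t ^ 2
          + (a + (a + b) / 2) / (2 * (b - a)) * t + -(a * ((a + b) / 2)) / (2 * (b - a)))
          * (Real.exp ((La * ((a + b) / 2) - Lm * a) * (2 / (b - a))) * Real.exp (L1 * t)) := by
      apply intervalIntegral.integral_mono_on hm1 hPf.abs
        (Continuous.intervalIntegrable (by fun_prop) _ _)
      intro t ht
      have hP0 : 0 ≤ -(1 / (2 * (b - a))) * t ^ 2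
          + (a + (a + b) / 2) / (2 * (b - a)) * t + -(a * ((a + b) / 2)) / (2 * (b - a)) := by
        have hPe : -(1 / (2 * (b - a))) * t ^ 2
            + (a + (a + b) / 2) / (2 * (b - a)) * t + -(a * ((a + b) / 2)) / (2 * (b - a))
            = (t - a) * ((a + b) / 2 - t) / (2 * (b - a)) := by
          field_simp
          ring
        rw [hPe]
        apply div_nonneg (mul_nonneg (by linarith [ht.1]) (by linarith [ht.2])) (by linarith)
      rw [abs_mul, abs_of_nonneg hP0]
      exact mul_le_mul_of_nonneg_left (hbd1 t ht) hP0
    have hpull : (∫ t in a..((a + b) / 2), (-(1 / (2 * (b - a))) * t ^ 2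
          + (a + (a + b) / 2) / (2 * (b - a)) * t + -(a * ((a + b) / 2)) / (2 * (b - a)))
          * (Real.exp ((La * ((a + b) / 2) - Lm * a) * (2 / (b - a))) * Real.exp (L1 * t)))
        = Real.exp ((La * ((a + b) / 2) - Lm * a) * (2 / (b - a)))
          * ∫ t in a..((a + b) / 2), (-(1 / (2 * (b - a))) * t ^ 2
            + (a + (a + b) / 2) / (2 * (b - a)) * t + -(a * ((a + b) / 2)) / (2 * (b - a)))
            * Real.exp (L1 * t) := by
      rw [← intervalIntegral.integral_const_mul]
      apply intervalIntegral.integral_congr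
      intro x _
      ring
    have hval := exp_int (-(1 / (2 * (b - a)))) ((a + (a + b) / 2) / (2 * (b - a)))
      (-(a * ((a + b) / 2)) / (2 * (b - a))) L1 a ((a + b) / 2) hL1ne
    calc |∫ t in a..((a + b) / 2), (-(1 / (2 * (b - a))) * t ^ 2
          + (a + (a + b) / 2) / (2 * (b - a)) * t + -(a * ((a + b) / 2)) / (2 * (b - a))) * f'' t|
        ≤ ∫ t in a..((a + b) / 2), |(-(1 / (2 * (b - a))) * t ^ 2
          + (a + (a + b) / 2) / (2 * (b - a)) * t + -(a * ((a + b) / 2)) / (2 * (b - a))) * f'' t| :=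
          intervalIntegral.abs_integral_le_integral_abs hm1
      _ ≤ _ := hmono
      _ = _ := hpull
      _ = _ := by rw [hval]
      _ = _ := by
          rw [hAe, hlogκ, hκpow a, hκpow ((a + b) / 2)]
          congr 1
          generalize Real.exp (L1 * a) = Ea
          generalize Real.exp (L1 * ((a + b) / 2)) = Em
          field_simp [hne, hL1ne]
          ring
  have key2 : |∫ t in ((a + b) / 2)..b, (-(1 / (2 * (b - a))) * t ^ 2
        + ((a + b) / 2 + b) / (2 * (b - a)) * t + -(((a + b) / 2) * b) / (2 * (b - a))) * f'' t|
      ≤ (|f'' ((a + b) / 2)| ^ b / |f'' b| ^ ((a + b) / 2)) ^ (2 / (b - a))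
            * ((τ₁ ^ ((a + b) / 2) - τ₁ ^ b
                + ((b - a) / 4) * (τ₁ ^ b + τ₁ ^ ((a + b) / 2)) * Real.log τ₁)
                / ((b - a) * (Real.log τ₁) ^ 3)) := by
    have hPf : IntervalIntegrable (fun t => (-(1 / (2 * (b - a))) * t ^ 2
        + ((a + b) / 2 + b) / (2 * (b - a)) * t + -(((a + b) / 2) * b) / (2 * (b - a))) * f'' t)
        MeasureTheory.volume ((a + b) / 2) b :=
      hint2.continuousOn_mul (by fun_prop)
    have hmono : (∫ t in ((a + b) / 2)..b, |(-(1 / (2 * (b - a))) * t ^ 2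
          + ((a + b) / 2 + b) / (2 * (b - a)) * t + -(((a + b) / 2) * b) / (2 * (b - a))) * f'' t|)
        ≤ ∫ t in ((a + b) / 2)..b, (-(1 / (2 * (b - a))) * t ^ 2
          + ((a + b) / 2 + b) / (2 * (b - a)) * t + -(((a + b) / 2) * b) / (2 * (b - a)))
          * (Real.exp ((Lm * b - Lb * ((a + b) / 2)) * (2 / (b - a))) * Real.exp (L2 * t)) := by
      apply intervalIntegral.integral_mono_on hm2 hPf.abs
        (Continuous.intervalIntegrable (by fun_prop) _ _)
      intro t ht
      have hP0 : 0 ≤ -(1 / (2 * (b - a))) * t ^ 2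
          + ((a + b) / 2 + b) / (2 * (b - a)) * t + -(((a + b) / 2) * b) / (2 * (b - a)) := by
        have hPe : -(1 / (2 * (b - a))) * t ^ 2
            + ((a + b) / 2 + b) / (2 * (b - a)) * t + -(((a + b) / 2) * b) / (2 * (b - a))
            = (b - t) * (t - (a + b) / 2) / (2 * (b - a)) := by
          field_simp
          ring
        rw [hPe]
        apply div_nonneg (mul_nonneg (by linarith [ht.2]) (by linarith [ht.1])) (by linarith)
      rw [abs_mul, abs_of_nonneg hP0]
      exact mul_le_mul_of_nonneg_left (hbd2 t ht) hP0
    have hpull : (∫ t in ((a + b) / 2)..b, (-(1 / (2 * (b - a))) * t ^ 2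
          + ((a + b) / 2 + b) / (2 * (b - a)) * t + -(((a + b) / 2) * b) / (2 * (b - a)))
          * (Real.exp ((Lm * b - Lb * ((a + b) / 2)) * (2 / (b - a))) * Real.exp (L2 * t)))
        = Real.exp ((Lm * b - Lb * ((a + b) / 2)) * (2 / (b - a)))
          * ∫ t in ((a + b) / 2)..b, (-(1 / (2 * (b - a))) * t ^ 2
            + ((a + b) / 2 + b) / (2 * (b - a)) * t + -(((a + b) / 2) * b) / (2 * (b - a)))
            * Real.exp (L2 * t) := by
      rw [← intervalIntegral.integral_const_mul]
      apply intervalIntegral.integral_congr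
      intro x _
      ring
    have hval := exp_int (-(1 / (2 * (b - a)))) (((a + b) / 2 + b) / (2 * (b - a)))
      (-(((a + b) / 2) * b) / (2 * (b - a))) L2 ((a + b) / 2) b hL2ne
    calc |∫ t in ((a + b) / 2)..b, (-(1 / (2 * (b - a))) * t ^ 2
          + ((a + b) / 2 + b) / (2 * (b - a)) * t + -(((a + b) / 2) * b) / (2 * (b - a))) * f'' t|
        ≤ ∫ t in ((a + b) / 2)..b, |(-(1 / (2 * (b - a))) * t ^ 2
          + ((a + b) / 2 + b) / (2 * (b - a)) * t + -(((a + b) / 2) * b) / (2 * (b - a))) * f'' t| :=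
          intervalIntegral.abs_integral_le_integral_abs hm2
      _ ≤ _ := hmono
      _ = _ := hpull
      _ = _ := by rw [hval]
      _ = _ := by
          rw [hBe, hlogτ, hτpow b, hτpow ((a + b) / 2)]
          congr 1
          generalize Real.exp (L2 * b) = Eb
          generalize Real.exp (L2 * ((a + b) / 2)) = Em
          field_simp [hne, hL2ne]
          ring
  exact (abs_add_le _ _).trans (add_le_add key1 key2)
end

section
/- Let s ∈ (0,1], a, b, c ∈ ℝ with b ≥ 0 and 0 ≤ c ≤ a, and define f : [0,∞) → ℝ by f(0) = a and f(t) = b·t^s + c for t > 0. Then f is s-convex in the second sense, i.e., f(tx + (1-t)y) ≤ t^s f(x) + (1-t)^s f(y) for all x, y ∈ [0,∞) and t ∈ [0,1]. -/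
open Real

lemma my_rpow_add_le (x y s : ℝ) (hx : 0 ≤ x) (hy : 0 ≤ y) (hs0 : 0 ≤ s) (hs1 : s ≤ 1) :
    (x + y) ^ s ≤ x ^ s + y ^ s := by
  lift x to NNReal using hx
  lift y to NNReal using hy
  have := NNReal.rpow_add_le_add_rpow x y hs0 hs1
  rw [← NNReal.coe_add, ← NNReal.coe_rpow]
  push_cast
  exact_mod_cast this

lemma my_self_le_rpow (t s : ℝ) (ht0 : 0 ≤ t) (ht1 : t ≤ 1) (hs0 : 0 < s) (hs1 : s ≤ 1) :
    t ≤ t ^ s := by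
  rcases eq_or_lt_of_le ht0 with h | h
  · simp [← h, Real.zero_rpow hs0.ne']
  · calc t = t ^ (1:ℝ) := by rw [Real.rpow_one]
      _ ≤ t ^ s := Real.rpow_le_rpow_of_exponent_ge h ht1 hs1

theorem hudzik_example_sconvex (s a b c : ℝ) (f : ℝ → ℝ)
    (hs : s ∈ Set.Ioc (0:ℝ) 1) (hb : 0 ≤ b) (hc0 : 0 ≤ c) (hca : c ≤ a)
    (hf0 : f 0 = a) (hft : ∀ t : ℝ, 0 < t → f t = b * t ^ s + c) :
    ∀ x : ℝ, 0 ≤ x → ∀ y : ℝ, 0 ≤ y → ∀ t ∈ Set.Icc (0:ℝ) 1,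
      f (t * x + (1 - t) * y) ≤ t ^ s * f x + (1 - t) ^ s * f y := by
  obtain ⟨hs0, hs1⟩ := hs
  intro x hx y hy t ⟨ht0, ht1⟩
  have h1t : 0 ≤ 1 - t := by linarith
  -- lower bound: b * x^s + c ≤ f x for x ≥ 0
  have hlow : ∀ u : ℝ, 0 ≤ u → b * u ^ s + c ≤ f u := by
    intro u hu
    rcases eq_or_lt_of_le hu with h | h
    · rw [← h, hf0, Real.zero_rpow hs0.ne']; linarith
    · rw [hft u h]
  have hts : 0 ≤ t ^ s := Real.rpow_nonneg ht0 s
  have h1ts : 0 ≤ (1 - t) ^ s := Real.rpow_nonneg h1t s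
  have hsum : 1 ≤ t ^ s + (1 - t) ^ s := by
    have := my_self_le_rpow t s ht0 ht1 hs0 hs1
    have := my_self_le_rpow (1 - t) s h1t (by linarith) hs0 hs1
    linarith
  have hfx := hlow x hx
  have hfy := hlow y hy
  set z := t * x + (1 - t) * y with hz
  have hz0 : 0 ≤ z := add_nonneg (mul_nonneg ht0 hx) (mul_nonneg h1t hy)
  rcases eq_or_lt_of_le hz0 with h | h
  · -- z = 0
    rw [← h, hf0]
    -- t*x = 0 and (1-t)*y = 0
    have htx : t * x = 0 ∧ (1 - t) * y = 0 := by
      constructor <;> nlinarith [mul_nonneg ht0 hx, mul_nonneg h1t hy]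
    rcases eq_or_lt_of_le ht0 with rfl | htpos
    · have : y = 0 := by nlinarith [htx.2]
      simp [this, hf0, Real.zero_rpow hs0.ne', Real.one_rpow]
    rcases eq_or_lt_of_le ht1 with rfl | ht1pos
    · have : x = 0 := by nlinarith [htx.1]
      simp [this, hf0, Real.zero_rpow hs0.ne', Real.one_rpow]
    · have hx0 : x = 0 := by
        rcases mul_eq_zero.mp htx.1 with h' | h'
        · linarith
        · exact h'
      have hy0 : y = 0 := by
        rcases mul_eq_zero.mp htx.2 with h' | h'
        · linarith
        · exact h'
      rw [hx0, hy0, hf0]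
      have ha0 : 0 ≤ a := le_trans hc0 hca
      nlinarith
  · -- z > 0
    rw [hft z h]
    have hzs : z ^ s ≤ t ^ s * x ^ s + (1 - t) ^ s * y ^ s := by
      calc z ^ s ≤ (t * x) ^ s + ((1 - t) * y) ^ s :=
            my_rpow_add_le _ _ s (mul_nonneg ht0 hx) (mul_nonneg h1t hy) hs0.le hs1
        _ = t ^ s * x ^ s + (1 - t) ^ s * y ^ s := by
            rw [Real.mul_rpow ht0 hx, Real.mul_rpow h1t hy]
    have key : b * z ^ s + c ≤ t ^ s * (b * x ^ s + c) + (1 - t) ^ s * (b * y ^ s + c) := by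
      nlinarith
    calc b * z ^ s + c ≤ t ^ s * (b * x ^ s + c) + (1 - t) ^ s * (b * y ^ s + c) := key
      _ ≤ t ^ s * f x + (1 - t) ^ s * f y := by
          gcongr <;> first | exact hfx | exact hfy
end

section
/- Let s ∈ (0,1), b > 0 and c < 0 be reals, a ∈ ℝ, and define f : [0,∞) → ℝ by f(0) = a and f(t) = b·t^s + c for t > 0. Then f is not s-convex in the second sense. -/
open Real

theorem hudzik_example_not_sconvex (s a b c : ℝ) (f : ℝ → ℝ)
    (hs : s ∈ Set.Ioo (0:ℝ) 1) (hb : 0 < b) (hc : c < 0)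
    (hf0 : f 0 = a) (hft : ∀ t : ℝ, 0 < t → f t = b * t ^ s + c) :
    ¬ (∀ x : ℝ, 0 ≤ x → ∀ y : ℝ, 0 ≤ y → ∀ t ∈ Set.Icc (0:ℝ) 1,
      f (t * x + (1 - t) * y) ≤ t ^ s * f x + (1 - t) ^ s * f y) := by
  obtain ⟨hs0, hs1⟩ := hs
  intro h
  set u : ℝ := ((-c) / (2 * b)) ^ (1 / s) with hu
  have hq : 0 < (-c) / (2 * b) := div_pos (by linarith) (by linarith)
  have hupos : 0 < u := rpow_pos_of_pos hq _
  have hus : u ^ s = (-c) / (2 * b) := by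
    rw [hu, ← rpow_mul hq.le, one_div, inv_mul_cancel₀ (ne_of_gt hs0), rpow_one]
  have hfu : f u = c / 2 := by
    rw [hft u hupos, hus]
    field_simp
    ring
  have := h u hupos.le u hupos.le (1/2) ⟨by norm_num, by norm_num⟩
  have heq : (1/2 : ℝ) * u + (1 - 1/2) * u = u := by ring
  rw [heq, hfu] at this
  have hp : (1/2 : ℝ) < ((1:ℝ)/2) ^ s := by
    calc (1/2:ℝ) = (1/2:ℝ) ^ (1:ℝ) := (rpow_one _).symm
    _ < (1/2:ℝ) ^ s := rpow_lt_rpow_of_exponent_gt (by norm_num) (by norm_num) hs1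
  have hcneg : c / 2 < 0 := by linarith
  nlinarith [this, hp, hcneg]
end

section
/- If s ∈ (0,1) and f : [0,∞) → ℝ is s-convex in the second sense, then f is nonnegative, i.e., f(x) ≥ 0 for all x ∈ [0,∞). -/
open Real

theorem sconvex_nonneg (s : ℝ) (f : ℝ → ℝ)
    (hs : s ∈ Set.Ioo (0:ℝ) 1)
    (hsc : ∀ x : ℝ, 0 ≤ x → ∀ y : ℝ, 0 ≤ y → ∀ t ∈ Set.Icc (0:ℝ) 1,
      f (t * x + (1 - t) * y) ≤ t ^ s * f x + (1 - t) ^ s * f y) :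
    ∀ x : ℝ, 0 ≤ x → 0 ≤ f x := by
  intro x hx
  have h := hsc x hx x hx (1/2) ⟨by norm_num, by norm_num⟩
  have hx' : (1/2 : ℝ) * x + (1 - 1/2) * x = x := by ring
  rw [hx'] at h
  have h2 : (1 - 1/2 : ℝ) = 1/2 := by norm_num
  rw [h2] at h
  have hgt : (1/2 : ℝ) < (1/2 : ℝ) ^ s := by
    have := Real.rpow_lt_rpow_of_exponent_gt (x := (1/2:ℝ)) (by norm_num) (by norm_num) hs.2
    simpa using this
  nlinarith [h, hgt]
end

section
/- Let f : [a,b] → ℝ be absolutely continuous with f'' ∈ L¹[a,b], and let a = x₀ < x₁ < ... < xₙ = b be a partition with hᵢ = x_{i+1} - xᵢ. Suppose |f''| is s-convex in the second sense on [a,b] for some s ∈ (0,1]. Let A = (1/4)·Σ_{i=0}^{n-1} hᵢ·[f(xᵢ) + 2f((xᵢ+x_{i+1})/2) + f(x_{i+1})] be the averaged midpoint-trapezoid quadrature. Then |∫_a^b f(x)dx − A| ≤ Σ_{i=0}^{n-1} (hᵢ³/(8(s+2)(s+3)))·[|f''((xᵢ+x_{i+1})/2)| + (|f''(xᵢ)|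 + |f''(x_{i+1})|)/2]. -/
open MeasureTheory Set intervalIntegral Real Finset

lemma intA (s c : ℝ) (hs : 0 < s) (hc : 0 < c) :
    ∫ x in (0:ℝ)..c, x ^ (s+1) * (c - x) = c ^ (s+3) / ((s+2)*(s+3)) := by
  have h1 : EqOn (fun x : ℝ => x ^ (s+1) * (c - x))
      (fun x : ℝ => c * x ^ (s+1) - x ^ (s+2)) (Set.uIcc 0 c) := by
    intro x hx
    rw [Set.uIcc_of_le hc.le] at hx
    rcases eq_or_lt_of_le hx.1 with h0 | h0
    · simp only [← h0]
      rw [Real.zero_rpow (by linarith), Real.zero_rpow (by linarith)]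
      ring
    · simp only
      have : x ^ (s+2) = x ^ (s+1) * x := by
        rw [show s + 2 = (s+1) + 1 by ring, Real.rpow_add_one (ne_of_gt h0)]
      rw [this]; ring
  have i1 : IntervalIntegrable (fun x : ℝ => x ^ (s+1)) volume 0 c :=
    (Real.continuous_rpow_const (by linarith)).intervalIntegrable _ _
  have i2 : IntervalIntegrable (fun x : ℝ => x ^ (s+2)) volume 0 c :=
    (Real.continuous_rpow_const (by linarith)).intervalIntegrable _ _
  rw [integral_congr h1, intervalIntegral.integral_sub (i1.const_mul c) i2,
    intervalIntegral.integral_const_mul,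
    integral_rpow (Or.inl (by linarith)), integral_rpow (Or.inl (by linarith)),
    Real.zero_rpow (by linarith : s+1+1 ≠ 0), Real.zero_rpow (by linarith : s+2+1 ≠ 0),
    show s+1+1 = s+2 by ring, show s+2+1 = s+3 by ring]
  have e1 : c * (c ^ (s+2)) = c ^ (s+3) := by
    rw [show s + 3 = (s+2) + 1 by ring, Real.rpow_add_one (ne_of_gt hc)]; ring
  have h2 : s + 2 ≠ 0 := by linarith
  have h3 : s + 3 ≠ 0 := by linarith
  field_simp
  nlinarith [e1]

lemma intB (s c : ℝ) (hs : 0 < s) (hc : 0 < c) :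
    ∫ x in (0:ℝ)..c, x * (c - x) ^ (s+1) = c ^ (s+3) / ((s+2)*(s+3)) := by
  have := intervalIntegral.integral_comp_sub_left (a := (0:ℝ)) (b := c)
    (fun y => y ^ (s+1) * (c - y)) c
  simp only [sub_zero, sub_self] at this
  rw [← intA s c hs hc, ← this]
  apply intervalIntegral.integral_congr
  intro x _
  simp only
  ring_nf

-- kernel identity on a half interval [u,w]

lemma shiftA (s u w : ℝ) (hs : 0 < s) (huw : u < w) :
    ∫ t in u..w, (t - u) ^ (s+1) * (w - t) = (w-u) ^ (s+3) / ((s+2)*(s+3)) := by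
  have := intervalIntegral.integral_comp_sub_right (a := u) (b := w)
    (fun y => y ^ (s+1) * ((w - u) - y)) u
  simp only [sub_self] at this
  rw [show (∫ t in u..w, (t - u) ^ (s+1) * (w - t))
      = ∫ t in u..w, (t - u) ^ (s+1) * ((w - u) - (t - u)) by
    apply intervalIntegral.integral_congr; intro t _; simp only; ring_nf,
    this, intA s (w-u) hs (by linarith)]

lemma shiftB (s u w : ℝ) (hs : 0 < s) (huw : u < w) :
    ∫ t in u..w, (t - u) * (w - t) ^ (s+1) = (w-u) ^ (s+3) / ((s+2)*(s+3)) := by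
  have := intervalIntegral.integral_comp_sub_right (a := u) (b := w)
    (fun y => y * ((w - u) - y) ^ (s+1)) u
  simp only [sub_self] at this
  rw [show (∫ t in u..w, (t - u) * (w - t) ^ (s+1))
      = ∫ t in u..w, (t - u) * ((w - u) - (t - u)) ^ (s+1) by
    apply intervalIntegral.integral_congr; intro t _; simp only; ring_nf,
    this, intB s (w-u) hs (by linarith)]

lemma kernel_id (f f' f'' : ℝ → ℝ) (u w : ℝ) (huw : u ≤ w)
    (hf' : ∀ t ∈ Set.Icc u w, HasDerivAt f (f' t) t)
    (hf'' : ∀ t ∈ Set.Icc u w, HasDerivAt f' (f'' t) t)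
    (hint : IntervalIntegrable f'' volume u w) :
    ∫ t in u..w, ((t - u) * (t - w) / 2) * f'' t
      = (∫ t in u..w, f t) - ((w - u) / 2) * (f u + f w) := by
  set φ : ℝ → ℝ := fun t => ((t - u) * (t - w) / 2) * f' t - (t - (u + w) / 2) * f t with hφ
  have hcf : ContinuousOn f (Set.Icc u w) := fun t ht => ((hf' t ht).continuousAt).continuousWithinAt
  have hderiv : ∀ t ∈ Set.uIcc u w,
      HasDerivAt φ (((t - u) * (t - w) / 2) * f'' t - f t) t := by
    intro t ht
    rw [Set.uIcc_of_le huw] at ht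
    have h1 : HasDerivAt (fun t => ((t - u) * (t - w) / 2) * f' t)
        ((t - (u + w)/2) * f' t + ((t - u) * (t - w) / 2) * f'' t) t := by
      have hg : HasDerivAt (fun t : ℝ => (t - u) * (t - w) / 2) (t - (u + w)/2) t := by
        have : HasDerivAt (fun t : ℝ => (t - u) * (t - w) / 2)
            (((1) * (t - w) + (t - u) * 1) / 2) t := (((hasDerivAt_id t).sub_const u).mul
              ((hasDerivAt_id t).sub_const w)).div_const 2
        convert this using 1; ring
      exact hg.mul (hf'' t ht)
    have h2 : HasDerivAt (fun t => (t - (u + w) / 2) * f t)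
        (1 * f t + (t - (u + w)/2) * f' t) t :=
      ((hasDerivAt_id t).sub_const _).mul (hf' t ht)
    have := h1.sub h2
    exact this.congr_deriv (by ring)
  have hii : IntervalIntegrable (fun t => ((t - u) * (t - w) / 2) * f'' t) volume u w := by
    have : IntervalIntegrable (fun t => f'' t * ((t - u) * (t - w) / 2)) volume u w :=
      hint.mul_continuousOn (by fun_prop)
    have heq : (fun t => f'' t * ((t - u) * (t - w) / 2)) = (fun t => ((t - u) * (t - w) / 2) * f'' t) := by
      funext t; ring
    rwa [heq] at this
  have hfint : IntervalIntegrable f volume u w :=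
    (hcf.mono (by rw [Set.uIcc_of_le huw])).intervalIntegrable
  have := intervalIntegral.integral_eq_sub_of_hasDerivAt hderiv (hii.sub hfint)
  rw [intervalIntegral.integral_sub hii hfint] at this
  have hφw : φ w = -((w - u)/2) * f w := by simp only [hφ]; ring_nf
  have hφu : φ u = ((w - u)/2) * f u := by simp only [hφ]; ring_nf
  rw [hφw, hφu] at this
  linarith [this]

lemma half_bound (f'' : ℝ → ℝ) (s u w : ℝ) (hs : 0 < s) (huw : u < w)
    (hint : IntervalIntegrable f'' volume u w)
    (hsc2 : ∀ t ∈ Set.Icc u w,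
      |f'' t| ≤ ((t-u)/(w-u))^s * |f'' w| + ((w-t)/(w-u))^s * |f'' u|) :
    |∫ t in u..w, ((t - u) * (t - w) / 2) * f'' t|
      ≤ (w-u)^(3:ℕ) / (2*(s+2)*(s+3)) * (|f'' w| + |f'' u|) := by
  set c := w - u with hc
  have hcpos : 0 < c := by simp [hc]; linarith
  set g : ℝ → ℝ := fun t =>
    ((t-u) * (w-t) / 2) * (((t-u)/c)^s * |f'' w| + ((w-t)/c)^s * |f'' u|) with hg
  have hgcont : Continuous g := by
    apply Continuous.mul
    · fun_prop
    · apply Continuous.add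
      · exact ((Real.continuous_rpow_const hs.le).comp (by fun_prop)).mul continuous_const
      · exact ((Real.continuous_rpow_const hs.le).comp (by fun_prop)).mul continuous_const
  have hbd : ∀ᵐ t ∂(volume.restrict (Set.uIoc u w)), |((t - u) * (t - w) / 2) * f'' t| ≤ g t := by
    rw [Set.uIoc_of_le huw.le]
    filter_upwards [ae_restrict_mem measurableSet_Ioc] with t ht
    have h1 : 0 ≤ t - u := by linarith [ht.1]
    have h2 : 0 ≤ w - t := by linarith [ht.2]
    have habs : |(t - u) * (t - w) / 2| = (t-u) * (w-t) / 2 := by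
      rw [abs_div, abs_mul]
      rw [abs_of_nonneg h1, abs_of_nonneg (by norm_num : (0:ℝ) ≤ 2)]
      rw [show |t - w| = w - t from by rw [abs_sub_comm, abs_of_nonneg h2]]
    rw [abs_mul, habs]
    apply mul_le_mul_of_nonneg_left (hsc2 t ⟨by linarith [ht.1], ht.2⟩)
    positivity
  calc |∫ t in u..w, ((t - u) * (t - w) / 2) * f'' t|
      ≤ |∫ t in u..w, g t| := by
        rw [← Real.norm_eq_abs (∫ t in u..w, ((t - u) * (t - w) / 2) * f'' t)]
        apply intervalIntegral.norm_integral_le_abs_of_norm_le _ (hgcont.intervalIntegrable _ _)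
        filter_upwards [hbd] with t h
        rw [Real.norm_eq_abs]; exact h
    _ ≤ c^(3:ℕ) / (2*(s+2)*(s+3)) * (|f'' w| + |f'' u|) := by
        have hgeq : EqOn g (fun t => ((t-u)^(s+1) * (w-t)) * (|f'' w| / (2*c^s))
            + ((t-u) * (w-t)^(s+1)) * (|f'' u| / (2*c^s))) (Set.uIcc u w) := by
          intro t ht
          rw [Set.uIcc_of_le huw.le] at ht
          have h1 : 0 ≤ t - u := by linarith [ht.1]
          have h2 : 0 ≤ w - t := by linarith [ht.2]
          simp only [hg]
          rw [Real.div_rpow h1 hcpos.le, Real.div_rpow h2 hcpos.le]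
          have e1 : (t-u)^(s+1) = (t-u)^s * (t-u) := by
            rcases eq_or_lt_of_le h1 with h | h
            · rw [← h]; rw [Real.zero_rpow (by linarith)]; ring
            · rw [Real.rpow_add_one (ne_of_gt h)]
          have e2 : (w-t)^(s+1) = (w-t)^s * (w-t) := by
            rcases eq_or_lt_of_le h2 with h | h
            · rw [← h]; rw [Real.zero_rpow (by linarith)]; ring
            · rw [Real.rpow_add_one (ne_of_gt h)]
          rw [e1, e2]
          field_simp
        have c1 : Continuous (fun t : ℝ => (t-u)^(s+1)) :=
          (Real.continuous_rpow_const (by linarith)).comp (by fun_prop)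
        have c2 : Continuous (fun t : ℝ => (w-t)^(s+1)) :=
          (Real.continuous_rpow_const (by linarith)).comp (by fun_prop)
        have i1 : IntervalIntegrable
            (fun t => (t-u)^(s+1) * (w-t) * (|f'' w| / (2*c^s))) volume u w :=
          ((c1.mul (by fun_prop)).mul continuous_const).intervalIntegrable _ _
        have i2 : IntervalIntegrable
            (fun t => (t-u) * (w-t)^(s+1) * (|f'' u| / (2*c^s))) volume u w :=
          (((by fun_prop : Continuous (fun t : ℝ => t - u)).mul c2).mul
            continuous_const).intervalIntegrable _ _
        rw [intervalIntegral.integral_congr hgeq,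
          intervalIntegral.integral_add i1 i2,
          intervalIntegral.integral_mul_const, intervalIntegral.integral_mul_const,
          shiftA s u w hs huw, shiftB s u w hs huw, ← hc]
        have hcs : (0:ℝ) < c ^ s := Real.rpow_pos_of_pos hcpos s
        have key : c ^ (s+3) / c ^ s = c ^ (3:ℕ) := by
          rw [← Real.rpow_natCast c 3, ← Real.rpow_sub hcpos]
          norm_num
        have e3 : c ^ (s+3) / ((s+2)*(s+3)) * (|f'' w| / (2*c^s))
            + c ^ (s+3) / ((s+2)*(s+3)) * (|f'' u| / (2*c^s))
            = c^(3:ℕ) / (2*(s+2)*(s+3)) * (|f'' w| + |f'' u|) := by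
          rw [← key]
          have h2 : s + 2 ≠ 0 := by linarith
          have h3 : s + 3 ≠ 0 := by linarith
          field_simp
        rw [e3, abs_of_nonneg (by positivity)]

lemma interval_bound (f f' f'' : ℝ → ℝ) (a b s u v : ℝ) (hs : 0 < s)
    (hu : u ∈ Set.Icc a b) (hv : v ∈ Set.Icc a b) (huv : u < v)
    (hf' : ∀ t ∈ Set.Icc a b, HasDerivAt f (f' t) t)
    (hf'' : ∀ t ∈ Set.Icc a b, HasDerivAt f' (f'' t) t)
    (hint : IntegrableOn f'' (Set.Icc a b))
    (hsc : ∀ x ∈ Set.Icc a b, ∀ y ∈ Set.Icc a b, ∀ t ∈ Set.Icc (0:ℝ) 1,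
        |f'' (t * x + (1 - t) * y)| ≤ t ^ s * |f'' x| + (1 - t) ^ s * |f'' y|) :
    |(∫ t in u..v, f t) - ((v - u)/4) * (f u + 2 * f ((u+v)/2) + f v)|
      ≤ (v-u)^(3:ℕ) / (8*(s+2)*(s+3)) * (|f'' ((u+v)/2)| + (|f'' u| + |f'' v|)/2) := by
  set m := (u+v)/2 with hm
  have hum : u < m := by simp only [hm]; linarith
  have hmv : m < v := by simp only [hm]; linarith
  have hmab : m ∈ Set.Icc a b := ⟨by linarith [hu.1], by linarith [hv.2]⟩
  have hsub1 : Set.Icc u m ⊆ Set.Icc a b :=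
    Set.Icc_subset_Icc hu.1 (by linarith [hv.2])
  have hsub2 : Set.Icc m v ⊆ Set.Icc a b :=
    Set.Icc_subset_Icc (by linarith [hu.1]) hv.2
  have hii1 : IntervalIntegrable f'' volume u m := by
    apply MeasureTheory.IntegrableOn.intervalIntegrable
    rw [Set.uIcc_of_le hum.le]; exact hint.mono_set hsub1
  have hii2 : IntervalIntegrable f'' volume m v := by
    apply MeasureTheory.IntegrableOn.intervalIntegrable
    rw [Set.uIcc_of_le hmv.le]; exact hint.mono_set hsub2
  -- kernel identities
  have k1 := kernel_id f f' f'' u m hum.le (fun t ht => hf' t (hsub1 ht))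
    (fun t ht => hf'' t (hsub1 ht)) hii1
  have k2 := kernel_id f f' f'' m v hmv.le (fun t ht => hf' t (hsub2 ht))
    (fun t ht => hf'' t (hsub2 ht)) hii2
  -- integral split
  have hcf : ContinuousOn f (Set.Icc a b) := fun t ht => ((hf' t ht).continuousAt).continuousWithinAt
  have hfi1 : IntervalIntegrable f volume u m := by
    apply ContinuousOn.intervalIntegrable
    rw [Set.uIcc_of_le hum.le]; exact hcf.mono hsub1
  have hfi2 : IntervalIntegrable f volume m v := by
    apply ContinuousOn.intervalIntegrable
    rw [Set.uIcc_of_le hmv.le]; exact hcf.mono hsub2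
  have hsplit : (∫ t in u..v, f t) = (∫ t in u..m, f t) + ∫ t in m..v, f t :=
    (intervalIntegral.integral_add_adjacent_intervals hfi1 hfi2).symm
  -- s-convexity pointwise bounds
  have hsc1 : ∀ t ∈ Set.Icc u m,
      |f'' t| ≤ ((t-u)/(m-u))^s * |f'' m| + ((m-t)/(m-u))^s * |f'' u| := by
    intro t ht
    have hpos : 0 < m - u := by linarith
    set lam := (t - u) / (m - u) with hlam
    have hl0 : 0 ≤ lam := div_nonneg (by linarith [ht.1]) hpos.le
    have hl1 : lam ≤ 1 := by
      rw [hlam, div_le_one hpos]; linarith [ht.2]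
    have := hsc m hmab u (hsub1 ⟨le_refl u, hum.le⟩) lam ⟨hl0, hl1⟩
    have heq : lam * m + (1 - lam) * u = t := by
      rw [hlam]; field_simp; ring
    have heq2 : 1 - lam = (m - t) / (m - u) := by
      rw [hlam]; field_simp; ring
    rw [heq, heq2] at this
    exact this
  have hsc2 : ∀ t ∈ Set.Icc m v,
      |f'' t| ≤ ((t-m)/(v-m))^s * |f'' v| + ((v-t)/(v-m))^s * |f'' m| := by
    intro t ht
    have hpos : 0 < v - m := by linarith
    set lam := (t - m) / (v - m) with hlam
    have hl0 : 0 ≤ lam := div_nonneg (by linarith [ht.1]) hpos.le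
    have hl1 : lam ≤ 1 := by
      rw [hlam, div_le_one hpos]; linarith [ht.2]
    have := hsc v hv m hmab lam ⟨hl0, hl1⟩
    have heq : lam * v + (1 - lam) * m = t := by
      rw [hlam]; field_simp; ring
    have heq2 : 1 - lam = (v - t) / (v - m) := by
      rw [hlam]; field_simp; ring
    rw [heq, heq2] at this
    exact this
  have b1 := half_bound f'' s u m hs hum hii1 hsc1
  have b2 := half_bound f'' s m v hs hmv hii2 hsc2
  have hmu : m - u = (v - u) / 2 := by simp only [hm]; ring
  have hvm : v - m = (v - u) / 2 := by simp only [hm]; ring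
  rw [hmu] at b1
  rw [hvm] at b2
  have hiden : (∫ t in u..v, f t) - ((v - u)/4) * (f u + 2 * f m + f v)
      = (∫ t in u..m, ((t - u) * (t - m) / 2) * f'' t)
        + ∫ t in m..v, ((t - m) * (t - v) / 2) * f'' t := by
    rw [k1, k2, hsplit, hmu, hvm]; ring
  rw [hiden]
  calc |(∫ t in u..m, ((t - u) * (t - m) / 2) * f'' t)
        + ∫ t in m..v, ((t - m) * (t - v) / 2) * f'' t|
      ≤ |∫ t in u..m, ((t - u) * (t - m) / 2) * f'' t|
        + |∫ t in m..v, ((t - m) * (t - v) / 2) * f'' t| := abs_add_le _ _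
    _ ≤ ((v-u)/2)^(3:ℕ) / (2*(s+2)*(s+3)) * (|f'' m| + |f'' u|)
        + ((v-u)/2)^(3:ℕ) / (2*(s+2)*(s+3)) * (|f'' v| + |f'' m|) := add_le_add b1 b2
    _ = (v-u)^(3:ℕ) / (8*(s+2)*(s+3)) * (|f'' m| + (|f'' u| + |f'' v|)/2) := by
        have h2 : s + 2 ≠ 0 := by linarith
        have h3 : s + 3 ≠ 0 := by linarith
        field_simp
        ring

theorem quadrature_error_sconvex (f f' f'' : ℝ → ℝ) (a b s : ℝ) (n : ℕ) (P : ℕ → ℝ)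
    (hab : a < b) (hn : 0 < n)
    (hP0 : P 0 = a) (hPn : P n = b)
    (hPmono : ∀ i < n, P i < P (i + 1))
    (hs : s ∈ Set.Ioc (0:ℝ) 1)
    (hf' : ∀ t ∈ Set.Icc a b, HasDerivAt f (f' t) t)
    (hf'' : ∀ t ∈ Set.Icc a b, HasDerivAt f' (f'' t) t)
    (hint : IntegrableOn f'' (Set.Icc a b))
    (hsc : ∀ u ∈ Set.Icc a b, ∀ v ∈ Set.Icc a b, ∀ t ∈ Set.Icc (0:ℝ) 1,
        |f'' (t * u + (1 - t) * v)| ≤ t ^ s * |f'' u| + (1 - t) ^ s * |f'' v|) :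
    |(∫ t in a..b, f t)
        - (1 / 4) * ∑ i ∈ Finset.range n,
            (P (i + 1) - P i)
              * (f (P i) + 2 * f ((P i + P (i + 1)) / 2) + f (P (i + 1)))|
      ≤ ∑ i ∈ Finset.range n,
          ((P (i + 1) - P i) ^ 3 / (8 * (s + 2) * (s + 3)))
            * (|f'' ((P i + P (i + 1)) / 2)| + (|f'' (P i)| + |f'' (P (i + 1))|) / 2) := by
  -- monotonicity of partition
  have hmono : ∀ i j : ℕ, i ≤ j → j ≤ n → P i ≤ P j := by
    intro i j hij hjn
    induction j with
    | zero => simp_all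
    | succ k ih =>
      rcases Nat.lt_or_ge i (k+1) with h | h
      · have : P i ≤ P k := ih (Nat.lt_succ_iff.mp h) (by omega)
        exact this.trans (hPmono k (by omega)).le
      · have : i = k + 1 := le_antisymm hij h
        rw [this]
  have hmem : ∀ i ≤ n, P i ∈ Set.Icc a b := by
    intro i hi
    constructor
    · rw [← hP0]; exact hmono 0 i (Nat.zero_le _) hi
    · rw [← hPn]; exact hmono i n hi le_rfl
  have hcf : ContinuousOn f (Set.Icc a b) := fun t ht => ((hf' t ht).continuousAt).continuousWithinAt
  have hfint : ∀ k < n, IntervalIntegrable f volume (P k) (P (k+1)) := by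
    intro k hk
    apply ContinuousOn.intervalIntegrable
    apply hcf.mono
    rw [Set.uIcc_of_le (hPmono k hk).le]
    exact Set.Icc_subset_Icc (hmem k (by omega)).1 (hmem (k+1) (by omega)).2
  have hsum := intervalIntegral.sum_integral_adjacent_intervals hfint
  rw [hP0, hPn] at hsum
  rw [← hsum, Finset.mul_sum, ← Finset.sum_sub_distrib]
  calc |∑ i ∈ Finset.range n, ((∫ x in P i..P (i+1), f x)
          - 1/4 * ((P (i+1) - P i) * (f (P i) + 2 * f ((P i + P (i+1))/2) + f (P (i+1)))))|
      ≤ ∑ i ∈ Finset.range n, |(∫ x in P i..P (i+1), f x)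
          - 1/4 * ((P (i+1) - P i) * (f (P i) + 2 * f ((P i + P (i+1))/2) + f (P (i+1))))| :=
        Finset.abs_sum_le_sum_abs _ _
    _ ≤ _ := by
        apply Finset.sum_le_sum
        intro i hi
        rw [Finset.mem_range] at hi
        have := interval_bound f f' f'' a b s (P i) (P (i+1)) hs.1
          (hmem i (by omega)) (hmem (i+1) (by omega)) (hPmono i hi) hf' hf'' hint hsc
        calc |(∫ x in P i..P (i+1), f x)
              - 1/4 * ((P (i+1) - P i) * (f (P i) + 2 * f ((P i + P (i+1))/2) + f (P (i+1))))|
            = |(∫ x in P i..P (i+1), f x)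
              - ((P (i+1) - P i)/4) * (f (P i) + 2 * f ((P i + P (i+1))/2) + f (P (i+1)))| := by
              ring_nf
          _ ≤ _ := this.trans (le_of_eq (by ring))
end

section
/- Let f : [a,b] → ℝ be convex. Then Bullen's inequality holds: (1/(b-a))∫_a^b f(x)dx ≤ (1/2)[f((a+b)/2) + (f(a)+f(b))/2]. -/
open MeasureTheory intervalIntegral

lemma trapezoid_bound (f : ℝ → ℝ) (a b : ℝ) (hab : a < b)
    (hf : ConvexOn ℝ (Set.Icc a b) f)
    (hint : IntervalIntegrable f MeasureTheory.volume a b) :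
    ∫ x in a..b, f x ≤ (b - a) * (f a + f b) / 2 := by
  have hba : (0:ℝ) < b - a := by linarith
  set g : ℝ → ℝ := fun x => ((b * f a - a * f b) / (b - a)) + ((f b - f a) / (b - a)) * x with hg
  have key : ∀ x ∈ Set.Icc a b, f x ≤ g x := by
    intro x hx
    obtain ⟨hax, hxb⟩ := hx
    have h1 : (b - x) / (b - a) + (x - a) / (b - a) = 1 := by field_simp; ring
    have h2 : (0:ℝ) ≤ (b - x) / (b - a) := div_nonneg (by linarith) hba.le
    have h3 : (0:ℝ) ≤ (x - a) / (b - a) := div_nonneg (by linarith) hba.le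
    have := hf.2 (Set.left_mem_Icc.2 hab.le) (Set.right_mem_Icc.2 hab.le) h2 h3 h1
    have hx' : ((b - x) / (b - a)) • a + ((x - a) / (b - a)) • b = x := by
      rw [smul_eq_mul, smul_eq_mul, div_mul_eq_mul_div, div_mul_eq_mul_div, ← add_div,
        div_eq_iff hba.ne']
      ring
    rw [hx'] at this
    have : f x ≤ ((b - x) / (b - a)) * f a + ((x - a) / (b - a)) * f b := this
    calc f x ≤ ((b - x) / (b - a)) * f a + ((x - a) / (b - a)) * f b := this
      _ = g x := by simp only [hg]; field_simp; ring
  have hgint : IntervalIntegrable g MeasureTheory.volume a b :=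
    (continuous_const.add (continuous_const.mul continuous_id)).intervalIntegrable a b
  have hmono : ∫ x in a..b, f x ≤ ∫ x in a..b, g x := by
    apply intervalIntegral.integral_mono_on hab.le hint hgint
    intro x hx
    exact key x hx
  have hgval : ∫ x in a..b, g x = (b - a) * (f a + f b) / 2 := by
    simp only [hg]
    rw [intervalIntegral.integral_add (intervalIntegrable_const)
      (show IntervalIntegrable (fun x => (f b - f a) / (b - a) * x) MeasureTheory.volume a b from
        (continuous_const.mul continuous_id').intervalIntegrable a b),
      intervalIntegral.integral_const, intervalIntegral.integral_const_mul,
      integral_id]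
    simp only [smul_eq_mul]
    field_simp
    ring
  linarith [hmono, hgval.le, hgval.ge]

theorem bullen_inequality (f : ℝ → ℝ) (a b : ℝ) (hab : a < b)
    (hf : ConvexOn ℝ (Set.Icc a b) f)
    (hint : IntervalIntegrable f MeasureTheory.volume a b) :
    (1 / (b - a)) * ∫ x in a..b, f x
      ≤ (1 / 2) * (f ((a + b) / 2) + (f a + f b) / 2) := by
  set m : ℝ := (a + b) / 2 with hm
  have ham : a < m := by simp only [hm]; linarith
  have hmb : m < b := by simp only [hm]; linarith
  have hsub1 : Set.Icc a m ⊆ Set.Icc a b := Set.Icc_subset_Icc le_rfl hmb.le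
  have hsub2 : Set.Icc m b ⊆ Set.Icc a b := Set.Icc_subset_Icc ham.le le_rfl
  have hint1 : IntervalIntegrable f MeasureTheory.volume a m := by
    apply hint.mono_set
    rw [Set.uIcc_of_le ham.le, Set.uIcc_of_le hab.le]
    exact hsub1
  have hint2 : IntervalIntegrable f MeasureTheory.volume m b := by
    apply hint.mono_set
    rw [Set.uIcc_of_le hmb.le, Set.uIcc_of_le hab.le]
    exact hsub2
  have t1 := trapezoid_bound f a m ham (hf.subset hsub1 (convex_Icc a m)) hint1
  have t2 := trapezoid_bound f m b hmb (hf.subset hsub2 (convex_Icc m b)) hint2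
  have hsplit : (∫ x in a..m, f x) + ∫ x in m..b, f x = ∫ x in a..b, f x :=
    intervalIntegral.integral_add_adjacent_intervals hint1 hint2
  have hI : ∫ x in a..b, f x ≤ (b - a) * (f m + (f a + f b) / 2) / 2 := by
    rw [← hsplit]
    have h1 : m - a = (b - a) / 2 := by simp only [hm]; ring
    have h2 : b - m = (b - a) / 2 := by simp only [hm]; ring
    rw [h1] at t1; rw [h2] at t2
    linarith
  have hba : (0:ℝ) < b - a := by linarith
  rw [one_div, inv_mul_le_iff₀ hba]
  calc ∫ x in a..b, f x ≤ (b - a) * (f m + (f a + f b) / 2) / 2 := hI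
    _ ≤ (b - a) * (1 / 2 * (f m + (f a + f b) / 2)) := le_of_eq (by ring)
end
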